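/- arXiv:2505.05574 — 5 statements merged into one kernel-verified Lean document; each statement's English description precedes it below -/
import Mathlib

section
/- For Re(s) > max{-ν, 0}, the function W_ν(s) := ∫₀^∞ Γ(ν, 2x) e^x x^{s-1} dx equals B(1/2; s, 1-s-ν) · Γ(s+ν), where B(z; a, b) = ∫₀^z u^{a-1}(1-u)^{b-1} du is the incomplete Beta function and Γ(ν, z) = ∫_z^∞ t^{ν-1} e^{-t} dt is the upper incomplete Gamma function. -/
open MeasureTheory Real Set Filter Asymptotics

/-- Upper incomplete Gamma function `Γ(ν, x) = ∫_x^∞ t^(ν-1) e^(-t) dt`. -/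
noncomputable def Ginc (ν x : ℝ) : ℝ := ∫ t in Set.Ioi x, t ^ (ν - 1) * Real.exp (-t)

namespace WAux

lemma intAux {a b : ℝ} (ha : -1 < a) (hb : 0 < b) :
    IntegrableOn (fun t : ℝ => t ^ a * Real.exp (-b * t)) (Set.Ioi 0) := by
  have h := integrableOn_rpow_mul_exp_neg_mul_rpow ha zero_lt_one hb
  refine h.congr_fun (fun x _ => ?_) measurableSet_Ioi
  beta_reduce
  rw [Real.rpow_one]

noncomputable def Gfun (ν : ℝ) (s : ℂ) (x t : ℝ) : ℂ :=
  ((t ^ (ν - 1) * Real.exp (-t) : ℝ) : ℂ) * ((Real.exp x : ℝ) : ℂ) * (x : ℂ) ^ (s - 1)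

noncomputable def Ffun (ν : ℝ) (s : ℂ) (x t : ℝ) : ℂ :=
  (Set.Ioi (2 * x)).indicator (Gfun ν s x) t

noncomputable def Hfun (ν : ℝ) (s : ℂ) (t u : ℝ) : ℂ :=
  (t : ℂ) ^ (s + (ν : ℂ) - 1) * ((Real.exp (-((1 - u) * t)) : ℝ) : ℂ) * (u : ℂ) ^ (s - 1)

variable {ν : ℝ} {s : ℂ} {x t : ℝ}

lemma Ffun_slice (ν : ℝ) (s : ℂ) (t : ℝ) :
    (fun x => Ffun ν s x t) = (Set.Iio (t / 2)).indicator (fun x => Gfun ν s x t) := by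
  funext x
  simp only [Ffun, Set.indicator_apply, Set.mem_Ioi, Set.mem_Iio]
  exact if_congr ⟨fun h => by linarith, fun h => by linarith⟩ rfl rfl

lemma Gnorm (hx : (0:ℝ) < x) (ht : (0:ℝ) < t) :
    ‖Gfun ν s x t‖ = t ^ (ν - 1) * Real.exp (-t) * Real.exp x * x ^ (s.re - 1) := by
  rw [Gfun, norm_mul, norm_mul, Complex.norm_real, Complex.norm_real,
    Complex.norm_cpow_eq_rpow_re_of_pos hx, Complex.sub_re, Complex.one_re,
    Real.norm_of_nonneg (show (0:ℝ) ≤ t ^ (ν - 1) * Real.exp (-t) by positivity),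
    Real.norm_of_nonneg (Real.exp_pos x).le]

lemma G_intOn (hs0 : 0 < s.re) (ht : 0 < t) :
    IntegrableOn (fun x => Gfun ν s x t) (Set.Ioo 0 (t / 2)) := by
  have h1 : IntegrableOn (fun x : ℝ => (x : ℂ) ^ (s - 1)) (Set.Icc 0 (t / 2)) := by
    rw [integrableOn_Icc_iff_integrableOn_Ioc]
    exact (intervalIntegrable_iff_integrableOn_Ioc_of_le (by linarith)).mp
      (intervalIntegral.intervalIntegrable_cpow'
        (by rw [Complex.sub_re, Complex.one_re]; linarith))
  have h2 : IntegrableOn (fun x : ℝ => ((Real.exp x : ℝ) : ℂ) * (x : ℂ) ^ (s - 1))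
      (Set.Icc 0 (t / 2)) :=
    h1.continuousOn_mul (Complex.continuous_ofReal.comp Real.continuous_exp).continuousOn
      isCompact_Icc
  have h3 : IntegrableOn
      (fun x : ℝ => ((t ^ (ν - 1) * Real.exp (-t) : ℝ) : ℂ)
        * (((Real.exp x : ℝ) : ℂ) * (x : ℂ) ^ (s - 1))) (Set.Icc 0 (t / 2)) :=
    h2.const_mul _
  have h4 := h3.mono_set Set.Ioo_subset_Icc_self
  refine h4.congr_fun (fun x _ => ?_) measurableSet_Ioo
  simp [Gfun, mul_assoc]

end WAux

open WAux in
/-- For `Re s > max (-ν) 0`,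
`∫₀^∞ Γ(ν, 2x) e^x x^(s-1) dx = B(1/2; s, 1-s-ν) · Γ(s+ν)`. -/
theorem W_eq_incompleteBeta_mul_Gamma (ν : ℝ) (s : ℂ) (hs : s.re > max (-ν) 0) :
    (∫ x in Set.Ioi (0:ℝ), (Ginc ν (2*x) : ℂ) * (Real.exp x : ℂ) * (x:ℂ) ^ (s - 1))
      = (∫ u in (0:ℝ)..(1/2 : ℝ), (u:ℂ) ^ (s - 1) * ((1:ℂ) - (u:ℂ)) ^ ((1 - s - (ν:ℂ)) - 1))
          * Complex.Gamma (s + (ν:ℂ)) := by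
  have hs0 : 0 < s.re := lt_of_le_of_lt (le_max_right (-ν) 0) hs
  have hsν : 0 < s.re + ν := by
    have := lt_of_le_of_lt (le_max_left (-ν) 0) hs; linarith
  -- measurability of the region
  have hSmeas : MeasurableSet {p : ℝ × ℝ | 2 * p.1 < p.2} :=
    measurableSet_lt (measurable_fst.const_mul 2) measurable_snd
  have hf_uncurry : Function.uncurry (Ffun ν s)
      = Set.indicator {p : ℝ × ℝ | 2 * p.1 < p.2} (Function.uncurry (Gfun ν s)) := by
    funext p
    simp only [Function.uncurry, Ffun, Set.indicator_apply, Set.mem_Ioi, Set.mem_setOf_eq]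
  have hGcont : ContinuousOn (Function.uncurry (Gfun ν s))
      (Set.Ioi (0:ℝ) ×ˢ Set.Ioi (0:ℝ)) := by
    intro p hp
    obtain ⟨hp1, hp2⟩ := hp
    apply ContinuousAt.continuousWithinAt
    have c1 : ContinuousAt (fun q : ℝ × ℝ => ((q.2 ^ (ν - 1) * Real.exp (-q.2) : ℝ) : ℂ)) p := by
      apply Complex.continuous_ofReal.continuousAt.comp
      exact ((continuousAt_rpow_const _ _ (Or.inl (mem_Ioi.mp hp2).ne')).comp
        continuous_snd.continuousAt).mul
        ((Real.continuous_exp.comp continuous_neg).continuousAt.comp continuous_snd.continuousAt)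
    have c2 : ContinuousAt (fun q : ℝ × ℝ => ((Real.exp q.1 : ℝ) : ℂ)) p :=
      (Complex.continuous_ofReal.comp (Real.continuous_exp.comp continuous_fst)).continuousAt
    have c3 : ContinuousAt (fun q : ℝ × ℝ => (q.1 : ℂ) ^ (s - 1)) p :=
      (Complex.continuousAt_ofReal_cpow_const _ _ (Or.inr (mem_Ioi.mp hp1).ne')).comp
        continuous_fst.continuousAt
    exact (c1.mul c2).mul c3
  have hGaesm : AEStronglyMeasurable (Function.uncurry (Gfun ν s))
      ((volume.restrict (Set.Ioi (0:ℝ))).prod (volume.restrict (Set.Ioi (0:ℝ)))) := by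
    rw [Measure.prod_restrict]
    exact hGcont.aestronglyMeasurable (measurableSet_Ioi.prod measurableSet_Ioi)
  have hFaesm : AEStronglyMeasurable (Function.uncurry (Ffun ν s))
      ((volume.restrict (Set.Ioi (0:ℝ))).prod (volume.restrict (Set.Ioi (0:ℝ)))) := by
    rw [hf_uncurry]
    exact hGaesm.indicator hSmeas
  -- slice integrability in x
  have hSlice : ∀ t : ℝ, 0 < t →
      Integrable (fun x => Ffun ν s x t) (volume.restrict (Set.Ioi (0:ℝ))) := by
    intro t ht
    rw [Ffun_slice, integrable_indicator_iff measurableSet_Iio, IntegrableOn,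
      Measure.restrict_restrict measurableSet_Iio, Set.Iio_inter_Ioi]
    exact G_intOn hs0 ht
  have hIoo : ∀ t : ℝ, 0 < t →
      ∫ x in Set.Ioo (0:ℝ) (t/2), (x : ℝ) ^ (s.re - 1) = (t/2) ^ s.re / s.re := by
    intro t ht
    rw [← integral_Ioc_eq_integral_Ioo,
      ← intervalIntegral.integral_of_le (by linarith : (0:ℝ) ≤ t/2),
      integral_rpow (Or.inl (by linarith)), sub_add_cancel,
      Real.zero_rpow hs0.ne', sub_zero]
  have hFint : Integrable (Function.uncurry (Ffun ν s))
      ((volume.restrict (Set.Ioi (0:ℝ))).prod (volume.restrict (Set.Ioi (0:ℝ)))) := by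
    rw [integrable_prod_iff' hFaesm]
    constructor
    · filter_upwards [self_mem_ae_restrict measurableSet_Ioi] with t ht
      simp only [Function.uncurry_apply_pair]
      exact hSlice t ht
    · have hb : Integrable (fun t : ℝ =>
          ((1/2 : ℝ) ^ s.re / s.re) * (t ^ (s.re + ν - 1) * Real.exp (-(1/2) * t)))
          (volume.restrict (Set.Ioi (0:ℝ))) :=
        (intAux (by linarith) (by norm_num)).const_mul _
      refine Integrable.mono' hb ?_ ?_
      · exact hFaesm.norm.prod_swap.integral_prod_right'
      · filter_upwards [self_mem_ae_restrict measurableSet_Ioi] with t ht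
        simp only [Function.uncurry_apply_pair]
        rw [Real.norm_of_nonneg (integral_nonneg fun x => norm_nonneg _)]
        have e2 : (fun x => ‖Ffun ν s x t‖)
            = Set.indicator (Set.Iio (t/2)) (fun x => ‖Gfun ν s x t‖) := by
          funext x
          rw [show Ffun ν s x t = (Set.Iio (t/2)).indicator (fun x => Gfun ν s x t) x from
            congrFun (Ffun_slice ν s t) x]
          exact norm_indicator_eq_indicator_norm _ _
        rw [show (fun x => ‖Ffun ν s x t‖) = _ from e2, integral_indicator measurableSet_Iio,
          Measure.restrict_restrict measurableSet_Iio, Set.Iio_inter_Ioi]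
        have ht0 : (0:ℝ) < t := ht
        have hrint : IntegrableOn
            (fun x : ℝ => (t ^ (ν - 1) * Real.exp (-t) * Real.exp (t/2)) * x ^ (s.re - 1))
            (Set.Ioo (0:ℝ) (t/2)) := by
          refine Integrable.const_mul ?_ _
          exact (intervalIntegrable_iff_integrableOn_Ioo_of_le (by linarith)).mp
            (intervalIntegral.intervalIntegrable_rpow' (by linarith))
        calc ∫ x in Set.Ioo (0:ℝ) (t/2), ‖Gfun ν s x t‖
            ≤ ∫ x in Set.Ioo (0:ℝ) (t/2),
              (t ^ (ν - 1) * Real.exp (-t) * Real.exp (t/2)) * x ^ (s.re - 1) := by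
              refine setIntegral_mono_on ((G_intOn hs0 ht0).norm) hrint measurableSet_Ioo ?_
              intro x hx
              rw [Gnorm hx.1 ht0]
              have h1 : Real.exp x ≤ Real.exp (t/2) := Real.exp_le_exp.mpr hx.2.le
              have h2 : (0:ℝ) ≤ t ^ (ν - 1) * Real.exp (-t) :=
                mul_nonneg (Real.rpow_nonneg ht0.le _) (Real.exp_pos _).le
              have h3 : (0:ℝ) ≤ x ^ (s.re - 1) := Real.rpow_nonneg hx.1.le _
              exact mul_le_mul_of_nonneg_right (mul_le_mul_of_nonneg_left h1 h2) h3
          _ = (t ^ (ν - 1) * Real.exp (-t) * Real.exp (t/2)) * ((t/2) ^ s.re / s.re) := by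
              rw [integral_const_mul, hIoo t ht0]
          _ = ((1/2 : ℝ) ^ s.re / s.re) * (t ^ (s.re + ν - 1) * Real.exp (-(1/2) * t)) := by
              have e1 : (t/2 : ℝ) ^ s.re = t ^ s.re * (1/2 : ℝ) ^ s.re := by
                rw [show (t/2 : ℝ) = t * (1/2) by ring, Real.mul_rpow ht0.le (by norm_num)]
              have e2 : t ^ (ν - 1) * t ^ s.re = t ^ (s.re + ν - 1) := by
                rw [← Real.rpow_add ht0]; congr 1; ring
              have e3 : Real.exp (-t) * Real.exp (t/2) = Real.exp (-(1/2) * t) := by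
                rw [← Real.exp_add]; congr 1; ring
              rw [e1, ← e2, ← e3]; ring
  -- Step 1: LHS as iterated integral of F
  have hLHS : (∫ x in Set.Ioi (0:ℝ), (Ginc ν (2*x) : ℂ) * (Real.exp x : ℂ) * (x:ℂ) ^ (s - 1))
      = ∫ x in Set.Ioi (0:ℝ), (∫ t in Set.Ioi (0:ℝ), Ffun ν s x t) := by
    refine setIntegral_congr_fun measurableSet_Ioi fun x hx => ?_
    have hx0 : (0:ℝ) < x := hx
    have hcast : ((Ginc ν (2*x) : ℝ) : ℂ)
        = ∫ t in Set.Ioi (2*x), ((t ^ (ν - 1) * Real.exp (-t) : ℝ) : ℂ) := by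
      unfold Ginc
      exact (integral_ofReal (𝕜 := ℂ)).symm
    rw [hcast, ← integral_mul_const, ← integral_mul_const]
    have hFin : (∫ t in Set.Ioi (0:ℝ), Ffun ν s x t)
        = ∫ t in Set.Ioi (2*x), Gfun ν s x t := by
      show ∫ t in Set.Ioi (0:ℝ), (Set.Ioi (2*x)).indicator (Gfun ν s x) t = _
      rw [setIntegral_indicator measurableSet_Ioi, Set.Ioi_inter_Ioi,
        sup_eq_right.mpr (by linarith : (0:ℝ) ≤ 2*x)]
    rw [hFin]
    rfl
  -- Step 2: Fubini
  have swap1 : ∫ x in Set.Ioi (0:ℝ), (∫ t in Set.Ioi (0:ℝ), Ffun ν s x t)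
      = ∫ t in Set.Ioi (0:ℝ), (∫ x in Set.Ioi (0:ℝ), Ffun ν s x t) :=
    integral_integral_swap hFint
  -- Step 3: inner integral via substitution x = t*u
  have hInner : ∀ t ∈ Set.Ioi (0:ℝ), (∫ x in Set.Ioi (0:ℝ), Ffun ν s x t)
      = ∫ u in Set.Ioc (0:ℝ) (1/2:ℝ), Hfun ν s t u := by
    intro t ht
    have ht0 : (0:ℝ) < t := ht
    have htc : (t:ℂ) ≠ 0 := Complex.ofReal_ne_zero.mpr ht0.ne'
    have A1 : (∫ x in Set.Ioi (0:ℝ), Ffun ν s x t)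
        = ∫ x in Set.Ioo (0:ℝ) (t/2), Gfun ν s x t := by
      rw [Ffun_slice, integral_indicator measurableSet_Iio,
        Measure.restrict_restrict measurableSet_Iio, Set.Iio_inter_Ioi]
    have A2 : (∫ x in Set.Ioo (0:ℝ) (t/2), Gfun ν s x t)
        = ∫ x in (0:ℝ)..(t/2), Gfun ν s x t := by
      rw [intervalIntegral.integral_of_le (by linarith : (0:ℝ) ≤ t/2),
        integral_Ioc_eq_integral_Ioo]
    have hsub := intervalIntegral.integral_comp_mul_left
      (a := 0) (b := 1/2) (fun x => Gfun ν s x t) ht0.ne'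
    rw [mul_zero, mul_one_div] at hsub
    have A3 : (∫ x in (0:ℝ)..(t/2), Gfun ν s x t)
        = t • ∫ u in (0:ℝ)..(1/2 : ℝ), Gfun ν s (t * u) t := by
      rw [hsub, smul_smul, mul_inv_cancel₀ ht0.ne', one_smul]
    have A4 : t • (∫ u in (0:ℝ)..(1/2 : ℝ), Gfun ν s (t * u) t)
        = ∫ u in Set.Ioc (0:ℝ) (1/2:ℝ), t • Gfun ν s (t * u) t := by
      rw [intervalIntegral.integral_of_le (by norm_num : (0:ℝ) ≤ 1/2), ← integral_smul]
    rw [A1, A2, A3, A4]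
    refine setIntegral_congr_fun measurableSet_Ioc fun u hu => ?_
    have hu0 : (0:ℝ) < u := hu.1
    have hpow : (t:ℂ) ^ (s + (ν:ℂ) - 1) = (t:ℂ) * (t:ℂ) ^ ((ν:ℂ) - 1) * (t:ℂ) ^ (s - 1) := by
      rw [show s + (ν:ℂ) - 1 = 1 + ((ν:ℂ) - 1) + (s - 1) by ring,
        Complex.cpow_add _ _ htc, Complex.cpow_add _ _ htc, Complex.cpow_one]
    have hexp : Real.exp (-((1 - u) * t)) = Real.exp (-t) * Real.exp (t * u) := by
      rw [← Real.exp_add]; congr 1; ring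
    simp only [Gfun, Hfun]
    rw [Complex.ofReal_mul (t:ℝ) u, Complex.mul_cpow_ofReal_nonneg ht0.le hu0.le,
      Complex.ofReal_mul (t ^ (ν-1)) (Real.exp (-t)), Complex.ofReal_cpow ht0.le,
      hpow, hexp]
    push_cast
    rw [Complex.real_smul]
    ring
  -- Step 4: second Fubini
  have hHaesm : AEStronglyMeasurable (Function.uncurry (Hfun ν s))
      ((volume.restrict (Set.Ioi (0:ℝ))).prod (volume.restrict (Set.Ioc (0:ℝ) (1/2:ℝ)))) := by
    rw [Measure.prod_restrict]
    refine ContinuousOn.aestronglyMeasurable ?_ (measurableSet_Ioi.prod measurableSet_Ioc)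
    intro p hp
    obtain ⟨hp1, hp2⟩ := hp
    apply ContinuousAt.continuousWithinAt
    have c1 : ContinuousAt (fun q : ℝ × ℝ => (q.1 : ℂ) ^ (s + (ν:ℂ) - 1)) p :=
      (Complex.continuousAt_ofReal_cpow_const _ _ (Or.inr (mem_Ioi.mp hp1).ne')).comp
        continuous_fst.continuousAt
    have c2 : ContinuousAt (fun q : ℝ × ℝ => ((Real.exp (-((1 - q.2) * q.1)) : ℝ) : ℂ)) p := by
      apply Complex.continuous_ofReal.continuousAt.comp
      exact (Real.continuous_exp.comp
        (((continuous_const.sub continuous_snd).mul continuous_fst).neg)).continuousAt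
    have c3 : ContinuousAt (fun q : ℝ × ℝ => (q.2 : ℂ) ^ (s - 1)) p :=
      (Complex.continuousAt_ofReal_cpow_const _ _ (Or.inr hp2.1.ne')).comp
        continuous_snd.continuousAt
    exact (c1.mul c2).mul c3
  have hHint : Integrable (Function.uncurry (Hfun ν s))
      ((volume.restrict (Set.Ioi (0:ℝ))).prod (volume.restrict (Set.Ioc (0:ℝ) (1/2:ℝ)))) := by
    have hu_int : Integrable (fun u : ℝ => u ^ (s.re - 1))
        (volume.restrict (Set.Ioc (0:ℝ) (1/2:ℝ))) :=
      (intervalIntegrable_iff_integrableOn_Ioc_of_le (by norm_num : (0:ℝ) ≤ 1/2)).mp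
        (intervalIntegral.intervalIntegrable_rpow' (by linarith))
    have ht_int : Integrable (fun t : ℝ => t ^ (s.re + ν - 1) * Real.exp (-(1/2) * t))
        (volume.restrict (Set.Ioi (0:ℝ))) :=
      intAux (by linarith) (by norm_num)
    have hg : Integrable (fun p : ℝ × ℝ =>
        (p.1 ^ (s.re + ν - 1) * Real.exp (-(1/2) * p.1)) * p.2 ^ (s.re - 1))
        ((volume.restrict (Set.Ioi (0:ℝ))).prod (volume.restrict (Set.Ioc (0:ℝ) (1/2:ℝ)))) :=
      ht_int.mul_prod hu_int
    refine Integrable.mono' hg hHaesm ?_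
    rw [Measure.prod_restrict]
    refine (ae_restrict_iff' (measurableSet_Ioi.prod measurableSet_Ioc)).mpr ?_
    filter_upwards with p hp
    obtain ⟨hp1, hp2⟩ := hp
    have hp1' : (0:ℝ) < p.1 := hp1
    have hp2' : (0:ℝ) < p.2 := hp2.1
    have hnorm : ‖Function.uncurry (Hfun ν s) p‖
        = p.1 ^ (s.re + ν - 1) * Real.exp (-((1 - p.2) * p.1)) * p.2 ^ (s.re - 1) := by
      show ‖Hfun ν s p.1 p.2‖ = _
      rw [Hfun, norm_mul, norm_mul, Complex.norm_real,
        Complex.norm_cpow_eq_rpow_re_of_pos hp1', Complex.norm_cpow_eq_rpow_re_of_pos hp2',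
        Real.norm_of_nonneg (Real.exp_pos _).le]
      norm_num [Complex.add_re, Complex.sub_re, Complex.one_re, Complex.ofReal_re]
    rw [hnorm]
    have hexple : Real.exp (-((1 - p.2) * p.1)) ≤ Real.exp (-(1/2) * p.1) := by
      apply Real.exp_le_exp.mpr
      have : (1/2) * p.1 ≤ (1 - p.2) * p.1 :=
        mul_le_mul_of_nonneg_right (by linarith [hp2.2]) hp1'.le
      linarith
    have h1 : (0:ℝ) ≤ p.1 ^ (s.re + ν - 1) := Real.rpow_nonneg hp1'.le _
    have h2 : (0:ℝ) ≤ p.2 ^ (s.re - 1) := Real.rpow_nonneg hp2'.le _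
    exact mul_le_mul_of_nonneg_right (mul_le_mul_of_nonneg_left hexple h1) h2
  have swap2 : ∫ t in Set.Ioi (0:ℝ), (∫ u in Set.Ioc (0:ℝ) (1/2:ℝ), Hfun ν s t u)
      = ∫ u in Set.Ioc (0:ℝ) (1/2:ℝ), (∫ t in Set.Ioi (0:ℝ), Hfun ν s t u) :=
    integral_integral_swap hHint
  -- Step 5: Gamma integral
  have hGamma : ∀ u ∈ Set.Ioc (0:ℝ) (1/2:ℝ), (∫ t in Set.Ioi (0:ℝ), Hfun ν s t u)
      = ((u:ℂ) ^ (s - 1) * ((1:ℂ) - (u:ℂ)) ^ ((1 - s - (ν:ℂ)) - 1))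
          * Complex.Gamma (s + (ν:ℂ)) := by
    intro u hu
    have h1u : (0:ℝ) < 1 - u := by linarith [hu.2]
    have hre : 0 < (s + (ν:ℂ)).re := by
      simp only [Complex.add_re, Complex.ofReal_re]; linarith
    have key := Complex.integral_cpow_mul_exp_neg_mul_Ioi (a := s + (ν:ℂ)) (r := 1 - u) hre h1u
    have e1 : (∫ t in Set.Ioi (0:ℝ), Hfun ν s t u)
        = (∫ t in Set.Ioi (0:ℝ),
            (t:ℂ) ^ (s + (ν:ℂ) - 1) * Complex.exp (((-((1 - u) * t) : ℝ) : ℂ)))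
          * (u:ℂ) ^ (s - 1) := by
      rw [← integral_mul_const]
      refine setIntegral_congr_fun measurableSet_Ioi fun t _ => ?_
      simp only [Hfun, Complex.ofReal_exp]
    rw [e1]
    have e2 : (∫ t in Set.Ioi (0:ℝ),
        (t:ℂ) ^ (s + (ν:ℂ) - 1) * Complex.exp (((-((1 - u) * t) : ℝ) : ℂ)))
        = (1 / ((1 - u : ℝ) : ℂ)) ^ (s + (ν:ℂ)) * Complex.Gamma (s + (ν:ℂ)) := by
      rw [← key]
      refine setIntegral_congr_fun measurableSet_Ioi fun t _ => ?_
      norm_cast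
    rw [e2]
    have harg : ((1 - u : ℝ) : ℂ).arg ≠ Real.pi := by
      rw [Complex.arg_ofReal_of_nonneg h1u.le]
      exact fun h => Real.pi_ne_zero h.symm
    have e3 : ((1:ℂ) / ((1 - u : ℝ) : ℂ)) ^ (s + (ν:ℂ))
        = ((1:ℂ) - (u:ℂ)) ^ ((1 - s - (ν:ℂ)) - 1) := by
      rw [one_div, Complex.inv_cpow _ _ harg, ← Complex.cpow_neg,
        show -(s + (ν:ℂ)) = (1 - s - (ν:ℂ)) - 1 by ring, Complex.ofReal_sub,
        Complex.ofReal_one]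
    rw [e3]
    ring
  -- assemble
  rw [hLHS, swap1]
  rw [show (∫ t in Set.Ioi (0:ℝ), (∫ x in Set.Ioi (0:ℝ), Ffun ν s x t))
      = ∫ t in Set.Ioi (0:ℝ), (∫ u in Set.Ioc (0:ℝ) (1/2:ℝ), Hfun ν s t u) from
    setIntegral_congr_fun measurableSet_Ioi hInner]
  rw [swap2]
  rw [show (∫ u in Set.Ioc (0:ℝ) (1/2:ℝ), (∫ t in Set.Ioi (0:ℝ), Hfun ν s t u))
      = ∫ u in Set.Ioc (0:ℝ) (1/2:ℝ),
          ((u:ℂ) ^ (s - 1) * ((1:ℂ) - (u:ℂ)) ^ ((1 - s - (ν:ℂ)) - 1))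
            * Complex.Gamma (s + (ν:ℂ)) from
    setIntegral_congr_fun measurableSet_Ioc hGamma]
  rw [integral_mul_const, intervalIntegral.integral_of_le (by norm_num : (0:ℝ) ≤ 1/2)]
end

section
/- The integral ∫₀^∞ Γ(ν, 2x) e^x x^{s-1} dx converges absolutely whenever Re(s) > max{-ν, 0}. -/
open MeasureTheory Real Set Filter Asymptotics

/-- `t ^ a * exp (-b*t)` is bounded on `[c, ∞)` for `b, c > 0`. -/
lemma bdd_aux (a b c : ℝ) (hb : 0 < b) (hc : 0 < c) :
    ∃ C : ℝ, 0 ≤ C ∧ ∀ t : ℝ, c ≤ t → t ^ a * Real.exp (-b * t) ≤ C := by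
  have h := tendsto_rpow_mul_exp_neg_mul_atTop_nhds_zero a b hb
  have h1 : ∀ᶠ t : ℝ in atTop, t ^ a * Real.exp (-b * t) ≤ 1 :=
    h.eventually (eventually_le_nhds one_pos)
  obtain ⟨T, hT⟩ := eventually_atTop.mp h1
  have hcont : ContinuousOn (fun t : ℝ => t ^ a * Real.exp (-b * t)) (Icc c T) := by
    intro t ht
    exact ((Real.continuousAt_rpow_const t a (Or.inl (ne_of_gt (lt_of_lt_of_le hc ht.1)))).mul
      ((Real.continuous_exp.comp (continuous_const.mul continuous_id)).continuousAt)).continuousWithinAt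
  obtain ⟨C0, hC0⟩ := isCompact_Icc.exists_bound_of_continuousOn hcont
  refine ⟨max C0 1, le_trans zero_le_one (le_max_right _ _), fun t ht => ?_⟩
  rcases le_total t T with h' | h'
  · have := hC0 t ⟨ht, h'⟩
    calc t ^ a * Real.exp (-b * t) ≤ ‖t ^ a * Real.exp (-b * t)‖ := le_abs_self _
    _ ≤ C0 := this
    _ ≤ max C0 1 := le_max_left _ _
  · exact le_trans (hT t h') (le_max_right _ _)

lemma int_aux (ν : ℝ) {y : ℝ} (hy : 0 < y) :
    IntegrableOn (fun t : ℝ => t ^ (ν - 1) * Real.exp (-t)) (Set.Ioi y) := by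
  obtain ⟨C, hC0, hC⟩ := bdd_aux (ν - 1) (1/2) y (by norm_num) hy
  have hmeas : AEStronglyMeasurable (fun t : ℝ => t ^ (ν - 1) * Real.exp (-t))
      (volume.restrict (Ioi y)) := by
    apply ContinuousOn.aestronglyMeasurable _ measurableSet_Ioi
    intro t ht
    exact ((Real.continuousAt_rpow_const t _ (Or.inl (ne_of_gt (hy.trans ht)))).mul
      ((Real.continuous_exp.comp continuous_neg).continuousAt)).continuousWithinAt
  apply Integrable.mono' (((exp_neg_integrableOn_Ioi y (by norm_num : (0:ℝ) < 1/2))).const_mul C)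
    hmeas
  filter_upwards [ae_restrict_mem measurableSet_Ioi] with t ht
  have ht0 : 0 < t := hy.trans ht
  rw [Real.norm_eq_abs, abs_of_nonneg (mul_nonneg (Real.rpow_nonneg ht0.le _) (Real.exp_pos _).le)]
  have hsplit : t ^ (ν - 1) * Real.exp (-t)
      = (t ^ (ν - 1) * Real.exp (-(1/2) * t)) * Real.exp (-(1/2) * t) := by
    rw [mul_assoc, ← Real.exp_add]; ring_nf
  rw [hsplit]
  exact mul_le_mul_of_nonneg_right (hC t ht.le) (Real.exp_pos _).le

lemma Ginc_nonneg (ν : ℝ) {y : ℝ} (hy : 0 < y) : 0 ≤ Ginc ν y :=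
  setIntegral_nonneg measurableSet_Ioi fun t ht =>
    mul_nonneg (Real.rpow_nonneg (le_of_lt (hy.trans ht)) _) (Real.exp_pos _).le

lemma Ginc_anti (ν : ℝ) : AntitoneOn (Ginc ν) (Set.Ioi 0) := by
  intro y hy y' _ h
  apply setIntegral_mono_set (int_aux ν hy)
  · filter_upwards [ae_restrict_mem measurableSet_Ioi] with t ht
    exact mul_nonneg (Real.rpow_nonneg (le_of_lt ((mem_Ioi.mp hy).trans ht)) _) (Real.exp_pos _).le
  · exact HasSubset.Subset.eventuallyLE (Ioi_subset_Ioi h)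

lemma Ginc_tail (ν : ℝ) : ∃ C : ℝ, 0 ≤ C ∧ ∀ y : ℝ, 1 ≤ y →
    Ginc ν y ≤ C * Real.exp (-(3/4) * y) := by
  obtain ⟨C0, hC00, hC0⟩ := bdd_aux (ν - 1) (1/4) 1 (by norm_num) one_pos
  refine ⟨C0 * (4/3), by positivity, fun y hy => ?_⟩
  have hy0 : 0 < y := lt_of_lt_of_le one_pos hy
  have h1 : Ginc ν y ≤ ∫ t in Ioi y, C0 * Real.exp (-(3/4) * t) := by
    apply setIntegral_mono_on (int_aux ν hy0)
      (((exp_neg_integrableOn_Ioi y (by norm_num : (0:ℝ) < 3/4))).const_mul C0)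
      measurableSet_Ioi
    intro t ht
    have h1t : 1 ≤ t := hy.trans (le_of_lt ht)
    have hsplit : t ^ (ν - 1) * Real.exp (-t)
        = (t ^ (ν - 1) * Real.exp (-(1/4) * t)) * Real.exp (-(3/4) * t) := by
      rw [mul_assoc, ← Real.exp_add]; ring_nf
    rw [hsplit]
    exact mul_le_mul_of_nonneg_right (hC0 t h1t) (Real.exp_pos _).le
  have h2 : (∫ t in Ioi y, Real.exp (-(3/4) * t)) = (4/3) * Real.exp (-(3/4) * y) := by
    have h3 : (∫ t in Ioi y, Real.exp (-((3/4) * t)))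
        = ((3:ℝ)/4)⁻¹ • ∫ t in Ioi ((3/4) * y), Real.exp (-t) :=
      integral_comp_mul_left_Ioi (fun u => Real.exp (-u)) y (by norm_num)
    rw [integral_exp_neg_Ioi] at h3
    simp only [neg_mul] at h3 ⊢
    rw [h3, smul_eq_mul]
    norm_num
  rw [MeasureTheory.integral_const_mul, h2] at h1
  calc Ginc ν y ≤ C0 * ((4/3) * Real.exp (-(3/4) * y)) := h1
  _ = C0 * (4/3) * Real.exp (-(3/4) * y) := by ring

lemma Ginc_small (ν μ0 : ℝ) (hμν : μ0 ≤ ν) (hμ0 : μ0 < 0) :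
    ∃ K : ℝ, 0 ≤ K ∧ ∀ y : ℝ, 0 < y → y ≤ 1 → Ginc ν y ≤ K * y ^ μ0 := by
  have hG1 : 0 ≤ Ginc ν 1 := Ginc_nonneg ν one_pos
  have hm' : (0:ℝ) < -μ0 := neg_pos.mpr hμ0
  refine ⟨1/(-μ0) + Ginc ν 1, add_nonneg (le_of_lt (div_pos one_pos hm')) hG1, fun y hy hy1 => ?_⟩
  have hIoc : IntegrableOn (fun t : ℝ => t ^ (ν - 1) * Real.exp (-t)) (Ioc y 1) :=
    (int_aux ν hy).mono_set Ioc_subset_Ioi_self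
  have hsplit : Ginc ν y = (∫ t in Ioc y 1, t ^ (ν - 1) * Real.exp (-t)) + Ginc ν 1 := by
    rw [Ginc, ← Ioc_union_Ioi_eq_Ioi hy1,
      setIntegral_union (Ioc_disjoint_Ioi le_rfl) measurableSet_Ioi hIoc (int_aux ν one_pos)]
    rfl
  have hμint : IntegrableOn (fun t : ℝ => t ^ (μ0 - 1)) (Ioc y 1) := by
    apply ContinuousOn.integrableOn_Icc (a := y) (b := 1) _ |>.mono_set Ioc_subset_Icc_self
    intro t ht
    exact (Real.continuousAt_rpow_const t _ (Or.inl (ne_of_gt (lt_of_lt_of_le hy ht.1)))).continuousWithinAt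
  have h1 : (∫ t in Ioc y 1, t ^ (ν - 1) * Real.exp (-t)) ≤ ∫ t in Ioc y 1, t ^ (μ0 - 1) := by
    apply setIntegral_mono_on hIoc hμint measurableSet_Ioc
    intro t ht
    have ht0 : 0 < t := hy.trans ht.1
    calc t ^ (ν - 1) * Real.exp (-t) ≤ t ^ (ν - 1) * 1 := by
          apply mul_le_mul_of_nonneg_left _ (Real.rpow_nonneg ht0.le _)
          exact Real.exp_le_one_iff.mpr (by linarith)
    _ = t ^ (ν - 1) := mul_one _
    _ ≤ t ^ (μ0 - 1) := Real.rpow_le_rpow_of_exponent_ge ht0 ht.2 (by linarith)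
  have h2 : (∫ t in Ioc y 1, t ^ (μ0 - 1)) = (1 - y ^ μ0) / μ0 := by
    rw [← intervalIntegral.integral_of_le hy1]
    rw [integral_rpow (Or.inr ⟨by intro h; apply hμ0.ne; linarith, by
      rw [Set.uIcc_of_le hy1]; intro h; exact absurd h.1 (not_le.mpr hy)⟩)]
    have : μ0 - 1 + 1 = μ0 := by ring
    rw [this, Real.one_rpow]
  have hA : 1 ≤ y ^ μ0 := Real.one_le_rpow_of_pos_of_le_one_of_nonpos hy hy1 hμ0.le
  have hm : 0 < -μ0 := neg_pos.mpr hμ0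
  calc Ginc ν y = (∫ t in Ioc y 1, t ^ (ν - 1) * Real.exp (-t)) + Ginc ν 1 := hsplit
  _ ≤ (1 - y ^ μ0) / μ0 + Ginc ν 1 := by linarith [h1, h2 ▸ h1]; 
  _ ≤ (1/(-μ0)) * y ^ μ0 + Ginc ν 1 * y ^ μ0 := by
      have e1 : (1 - y ^ μ0) / μ0 = (y ^ μ0 - 1) / (-μ0) := by
        rw [div_neg, ← neg_div, neg_sub]
      rw [e1, div_eq_mul_inv, one_div]
      have e2 : (y ^ μ0 - 1) * (-μ0)⁻¹ ≤ (-μ0)⁻¹ * y ^ μ0 := by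
        rw [mul_comm]
        apply mul_le_mul_of_nonneg_left (by linarith) (inv_nonneg.mpr hm.le)
      have e3 : Ginc ν 1 ≤ Ginc ν 1 * y ^ μ0 := le_mul_of_one_le_right hG1 hA
      linarith
  _ = (1/(-μ0) + Ginc ν 1) * y ^ μ0 := by ring

/-- The integral `∫₀^∞ Γ(ν, 2x) e^x x^(s-1) dx` converges absolutely whenever
`Re s > max (-ν) 0`. -/
theorem W_integrable (ν : ℝ) (s : ℂ) (hs : s.re > max (-ν) 0) :
    IntegrableOn (fun x : ℝ => (Ginc ν (2*x) : ℂ) * (Real.exp x : ℂ) * (x:ℂ) ^ (s - 1))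
      (Set.Ioi (0:ℝ)) := by
  have ha0 : 0 < s.re := lt_of_le_of_lt (le_max_right _ _) hs
  have haν : -ν < s.re := lt_of_le_of_lt (le_max_left _ _) hs
  set a := s.re with ha
  set μ0 := min ν (-(a/2)) with hμ0def
  have hμν : μ0 ≤ ν := min_le_left _ _
  have hμ0 : μ0 < 0 := lt_of_le_of_lt (min_le_right _ _) (by linarith)
  have hsum : 0 < μ0 + a := by
    have : -a < μ0 := lt_min (by linarith) (by linarith)
    linarith
  set f := fun x : ℝ => (Ginc ν (2*x) : ℂ) * (Real.exp x : ℂ) * (x:ℂ) ^ (s - 1) with hf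
  -- measurability on Ioi 0
  have hGm : AEMeasurable (fun x : ℝ => Ginc ν (2*x)) (volume.restrict (Ioi 0)) := by
    apply aemeasurable_restrict_of_antitoneOn measurableSet_Ioi
    intro x hx y hy hxy
    exact Ginc_anti ν (by simp at hx ⊢; linarith) (by simp at hy ⊢; linarith) (by linarith)
  have hfm : AEStronglyMeasurable f (volume.restrict (Ioi 0)) := by
    apply AEStronglyMeasurable.mul
    apply AEStronglyMeasurable.mul
    · exact (Complex.measurable_ofReal.comp_aemeasurable hGm).aestronglyMeasurable
    · exact ((Complex.continuous_ofReal.comp Real.continuous_exp).aestronglyMeasurable).restrict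
    · apply ContinuousOn.aestronglyMeasurable _ measurableSet_Ioi
      intro x hx
      exact ((continuousAt_cpow_const (Complex.mem_slitPlane_iff.mpr (Or.inl (by
        simpa using (mem_Ioi.mp hx))))).comp
        Complex.continuous_ofReal.continuousAt).continuousWithinAt
  -- norm formula
  have hnorm : ∀ x : ℝ, 0 < x → ‖f x‖ = Ginc ν (2*x) * Real.exp x * x ^ (a - 1) := by
    intro x hx
    rw [hf]
    simp only [norm_mul, Complex.norm_real, Real.norm_eq_abs,
      Complex.norm_cpow_eq_rpow_re_of_pos hx, Complex.sub_re, Complex.one_re]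
    rw [abs_of_nonneg (Ginc_nonneg ν (by linarith)), abs_of_nonneg (Real.exp_pos _).le]
  have hsplitset : Ioc (0:ℝ) (1/2) ∪ Ioi (1/2) = Ioi (0:ℝ) :=
    Ioc_union_Ioi_eq_Ioi (by norm_num)
  rw [IntegrableOn, ← hsplitset]
  apply IntegrableOn.union
  · -- near zero
    obtain ⟨K, hK0, hK⟩ := Ginc_small ν μ0 hμν hμ0
    have hdom : IntegrableOn (fun x : ℝ => (K * 2 ^ μ0 * Real.exp 1) * x ^ (μ0 + a - 1))
        (Ioc 0 (1/2)) := by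
      have hint := intervalIntegral.intervalIntegrable_rpow' (a := 0) (b := 1/2)
        (by linarith : (-1:ℝ) < μ0 + a - 1)
      rw [intervalIntegrable_iff_integrableOn_Ioc_of_le (by norm_num)] at hint
      exact hint.const_mul _
    apply Integrable.mono' hdom
      (hfm.mono_measure (Measure.restrict_mono (fun x hx => hx.1) le_rfl))
    filter_upwards [ae_restrict_mem measurableSet_Ioc] with x hx
    have hx0 : 0 < x := hx.1
    rw [hnorm x hx0]
    have h2x : Ginc ν (2*x) ≤ K * (2*x) ^ μ0 := hK (2*x) (by linarith) (by linarith [hx.2])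
    calc Ginc ν (2*x) * Real.exp x * x ^ (a - 1)
        ≤ ((K * (2*x) ^ μ0) * Real.exp 1) * x ^ (a - 1) := by
          apply mul_le_mul_of_nonneg_right _ (Real.rpow_nonneg hx0.le _)
          exact mul_le_mul h2x (Real.exp_le_exp.mpr (by linarith [hx.2]))
            (Real.exp_pos _).le (mul_nonneg hK0 (Real.rpow_nonneg (by linarith) _))
    _ = K * 2 ^ μ0 * Real.exp 1 * x ^ (μ0 + a - 1) := by
          rw [Real.mul_rpow (by norm_num) hx0.le]
          rw [show μ0 + a - 1 = μ0 + (a - 1) by ring, Real.rpow_add hx0]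
          ring
  · -- tail
    obtain ⟨C, hC0, hC⟩ := Ginc_tail ν
    obtain ⟨D, hD0, hD⟩ := bdd_aux (a - 1) (1/4) (1/2) (by norm_num) (by norm_num)
    have hdom : IntegrableOn (fun x : ℝ => (C * D) * Real.exp (-(1/4) * x)) (Ioi (1/2)) :=
      (exp_neg_integrableOn_Ioi (1/2) (by norm_num : (0:ℝ) < 1/4)).const_mul (C * D)
    apply Integrable.mono' hdom
      (hfm.mono_measure (Measure.restrict_mono (Ioi_subset_Ioi (by norm_num)) le_rfl))
    filter_upwards [ae_restrict_mem measurableSet_Ioi] with x hx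
    have hx0 : (0:ℝ) < x := lt_trans (by norm_num) hx
    rw [hnorm x hx0]
    have hge : (1:ℝ)/2 ≤ 2*x := by have := mem_Ioi.mp hx; linarith
    have h2x : Ginc ν (2*x) ≤ C * Real.exp (-(3/4) * (2*x)) := hC (2*x) (by
      have := mem_Ioi.mp hx; linarith)
    have hexp : Real.exp (-(3/4) * (2*x)) * Real.exp x
        = Real.exp (-(1/4) * x) * Real.exp (-(1/4) * x) := by
      rw [← Real.exp_add, ← Real.exp_add]; congr 1; ring
    calc Ginc ν (2*x) * Real.exp x * x ^ (a - 1)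
        ≤ ((C * Real.exp (-(3/4) * (2*x))) * Real.exp x) * x ^ (a - 1) := by
          apply mul_le_mul_of_nonneg_right _ (Real.rpow_nonneg hx0.le _)
          exact mul_le_mul_of_nonneg_right h2x (Real.exp_pos _).le
    _ = C * (x ^ (a - 1) * Real.exp (-(1/4) * x)) * Real.exp (-(1/4) * x) := by
          rw [mul_assoc C, hexp]; ring
    _ ≤ C * D * Real.exp (-(1/4) * x) := by
          apply mul_le_mul_of_nonneg_right _ (Real.exp_pos _).le
          exact mul_le_mul_of_nonneg_left (hD x (by have := mem_Ioi.mp hx; linarith)) hC0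
end

section
/- Suppose φ(s) = Σ_{n≥1} a_n λ_n^{−s} with λ_n > 0 increasing to infinity and Σ_{n≥1} |a_n| λ_n^{−α} < ∞ for some α. Then for ρ > 0, σ > 0, σ ≥ α, and x > 0 not equal to any λ_n: (1/Γ(ρ+1)) Σ_{λ_n ≤ x} a_n (x − λ_n)^ρ = (1/2πi) ∫_{σ−i∞}^{σ+i∞} Γ(s) φ(s) x^{s+ρ} / Γ(ρ+1+s) ds. -/
open MeasureTheory Real Set Filter Asymptotics intervalIntegral
open scoped ENNReal NNReal

namespace PerronAux
open Complex

lemma rpow_anti {x y c : ℝ} (hx : 0 < x) (hxy : x ≤ y) (hc : c ≤ 0) : y ^ c ≤ x ^ c := by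
  rw [← neg_neg c, Real.rpow_neg hx.le, Real.rpow_neg (hx.trans_le hxy).le]
  exact inv_anti₀ (Real.rpow_pos_of_pos hx _)
    (Real.rpow_le_rpow hx.le hxy (neg_nonneg.2 hc))

lemma abs_le_abs_s (σ t : ℝ) : |t| ≤ ‖(σ:ℂ) + t * I‖ := by
  simpa using Complex.abs_im_le_norm ((σ:ℂ) + t * I)

lemma s_ne_zero {σ t : ℝ} (ht : t ≠ 0) : (σ : ℂ) + t * I ≠ 0 := by
  intro h
  have : ((σ:ℂ) + t * I).im = 0 := by rw [h]; simp
  simp at this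
  exact ht this

lemma beta_base {σ w : ℝ} (hσ : 0 < σ) (hw : 0 < w) (hw1 : w ≤ 1) :
    ∃ C : ℝ, ∀ t : ℝ, 2 ≤ |t| →
      ‖Complex.betaIntegral ((σ : ℂ) + t * I) w‖ ≤ C * |t| ^ (-w) := by
  rcases eq_or_lt_of_le hw1 with rfl | hw1
  · -- w = 1
    refine ⟨1, fun t ht => ?_⟩
    have ht0 : t ≠ 0 := by intro h; rw [h] at ht; norm_num at ht
    have habs := abs_le_abs_s σ t
    have ht2 : (0:ℝ) < |t| := by positivity
    rw [show ((1:ℝ):ℂ) = 1 by norm_num, Complex.betaIntegral_eval_one_right (by simpa using hσ)]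
    rw [Real.rpow_neg_one, one_mul]
    simp only [norm_div, norm_one]
    rw [div_le_iff₀ (lt_of_lt_of_le ht2 habs)]
    calc (1:ℝ) = |t| * |t|⁻¹ := by field_simp
    _ ≤ ‖(σ:ℂ) + t * I‖ * |t|⁻¹ := by
        gcongr
    _ = |t|⁻¹ * ‖(σ:ℂ) + t * I‖ := by ring
  -- now w < 1
  set M : ℝ := max 1 ((2:ℝ) ^ (1 - σ)) with hM
  refine ⟨M / w + 2, fun t ht => ?_⟩
  have ht0 : t ≠ 0 := by intro h; rw [h] at ht; norm_num at ht
  have ht2 : (0:ℝ) < |t| := by positivity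
  set s : ℂ := (σ:ℂ) + t * I with hs
  have hs0 : s ≠ 0 := s_ne_zero ht0
  have hsre : 0 < s.re := by simpa [hs] using hσ
  have habs : |t| ≤ ‖s‖ := abs_le_abs_s σ t
  have habs0 : (0:ℝ) < ‖s‖ := lt_of_lt_of_le ht2 habs
  set a : ℝ := |t|⁻¹ with ha
  have ha0 : 0 < a := by positivity
  have ha2 : a ≤ 1/2 := by
    rw [ha]
    rw [inv_le_comm₀ ht2 (by norm_num)]
    linarith
  have ha1 : a < 1 := lt_of_le_of_lt ha2 (by norm_num)
  have h1a : (0:ℝ) < 1 - a := by linarith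
  have hsa : (‖s‖)⁻¹ ≤ a := by
    rw [ha]
    exact inv_anti₀ ht2 habs
  -- the real amplitude function
  set φ : ℝ → ℝ := fun u => (1 - u) ^ (w - 1) with hφ
  set g : ℝ → ℂ := fun u => (u:ℂ) ^ (s - 1) * ((φ u : ℝ) : ℂ) with hg
  -- betaIntegral equals ∫ g
  have hbeta : Complex.betaIntegral s w = ∫ u in (0:ℝ)..1, g u := by
    rw [Complex.betaIntegral]
    refine intervalIntegral.integral_congr fun u hu => ?_
    rw [uIcc_of_le (by norm_num : (0:ℝ) ≤ 1)] at hu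
    have h0u : 0 ≤ 1 - u := by linarith [hu.2]
    simp only [hg, hφ]
    congr 1
    rw [Complex.ofReal_cpow h0u]
    push_cast
    ring_nf
  have hwre : 0 < (w:ℂ).re := by simpa using hw
  have hIntg : IntervalIntegrable g volume 0 1 := by
    have h := Complex.betaIntegral_convergent hsre hwre
    rw [intervalIntegrable_iff_integrableOn_Ioc_of_le (by norm_num : (0:ℝ) ≤ 1)] at h ⊢
    refine h.congr_fun (fun u hu => ?_) measurableSet_Ioc
    have h0u : 0 ≤ 1 - u := by linarith [hu.2]
    simp only [hg, hφ]
    congr 1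
    rw [Complex.ofReal_cpow h0u]
    push_cast
    ring_nf
  have hsub1 : uIcc (0:ℝ) (1-a) ⊆ uIcc (0:ℝ) 1 := by
    rw [uIcc_of_le (by linarith : (0:ℝ) ≤ 1 - a), uIcc_of_le (by norm_num : (0:ℝ) ≤ 1)]
    exact Icc_subset_Icc le_rfl (by linarith)
  have hsub2 : uIcc (1-a) (1:ℝ) ⊆ uIcc (0:ℝ) 1 := by
    rw [uIcc_of_le (by linarith : (1-a:ℝ) ≤ 1), uIcc_of_le (by norm_num : (0:ℝ) ≤ 1)]
    exact Icc_subset_Icc (by linarith) le_rfl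
  have hIg1 : IntervalIntegrable g volume 0 (1-a) := hIntg.mono_set hsub1
  have hIg2 : IntervalIntegrable g volume (1-a) 1 := hIntg.mono_set hsub2
  have hsplit : (∫ u in (0:ℝ)..1, g u) = (∫ u in (0:ℝ)..(1-a), g u) + ∫ u in (1-a)..(1:ℝ), g u :=
    (intervalIntegral.integral_add_adjacent_intervals hIg1 hIg2).symm

  -- value of the elementary integral
  have hφval : (∫ u in (1-a)..(1:ℝ), φ u) = a ^ w / w := by
    have h1 : (∫ u in (1-a)..(1:ℝ), φ u) = ∫ v in (0:ℝ)..a, v ^ (w-1) := by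
      have := intervalIntegral.integral_comp_sub_left (a := 1-a) (b := 1)
        (fun v : ℝ => v ^ (w-1)) 1
      simpa using this
    rw [h1, integral_rpow (Or.inl (by linarith : (-1:ℝ) < w - 1))]
    rw [sub_add_cancel, Real.zero_rpow hw.ne']
    ring
  have hφint : IntervalIntegrable φ volume (1-a) 1 := by
    have h := (intervalIntegrable_rpow' (a := 0) (b := a)
      (by linarith : (-1:ℝ) < w - 1)).comp_sub_left 1
    simpa [hφ] using h.symm
  -- tail bound
  have htail : ‖∫ u in (1-a)..(1:ℝ), g u‖ ≤ M * (a ^ w / w) := by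
    have hMφ : ∀ u ∈ Icc (1-a) (1:ℝ), ‖g u‖ ≤ M * φ u := by
      intro u hu
      have hu0 : (0:ℝ) < u := by have := hu.1; linarith
      have hφ0 : 0 ≤ φ u := Real.rpow_nonneg (by linarith [hu.2] : (0:ℝ) ≤ 1 - u) _
      have : ‖g u‖ = u ^ (σ - 1) * φ u := by
        simp only [hg, norm_mul]
        rw [Complex.norm_cpow_eq_rpow_re_of_pos hu0]
        simp only [Complex.norm_real, Real.norm_eq_abs, _root_.abs_of_nonneg hφ0]
        congr 2
        simp [hs]
      rw [this]
      have hub : u ^ (σ - 1) ≤ M := by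
        rcases le_total 1 σ with h1σ | h1σ
        · refine le_trans (Real.rpow_le_one hu0.le (by linarith [hu.2]) (by linarith)) ?_
          exact le_max_left _ _
        · have h12 : (1:ℝ)/2 ≤ u := le_trans (by linarith) hu.1
          refine le_trans (rpow_anti (by norm_num) h12 (by linarith)) ?_
          have h2 : ((1:ℝ)/2) ^ (σ - 1) = (2:ℝ) ^ (1 - σ) := by
            rw [one_div, ← Real.rpow_neg_one 2, ← Real.rpow_mul (by norm_num : (0:ℝ) ≤ 2)]
            ring_nf
          rw [h2]
          exact le_max_right _ _
      exact mul_le_mul_of_nonneg_right hub hφ0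
    calc ‖∫ u in (1-a)..(1:ℝ), g u‖ ≤ ∫ u in (1-a)..(1:ℝ), ‖g u‖ :=
          intervalIntegral.norm_integral_le_integral_norm (by linarith)
    _ ≤ ∫ u in (1-a)..(1:ℝ), M * φ u := by
          refine intervalIntegral.integral_mono_on (by linarith) hIg2.norm
            (hφint.const_mul M) hMφ
    _ = M * (a ^ w / w) := by rw [intervalIntegral.integral_const_mul, hφval]

  -- main part via integration by parts
  set φ' : ℝ → ℝ := fun u => (1 - w) * (1 - u) ^ (w - 2) with hφ'
  set F : ℝ → ℂ := fun u => (u:ℂ) ^ s / s * ((φ u : ℝ) : ℂ) with hF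
  set T2 : ℝ → ℂ := fun u => (u:ℂ) ^ s / s * ((φ' u : ℝ) : ℂ) with hT2
  have hφ'cont : ContinuousOn (fun u : ℝ => ((φ' u : ℝ) : ℂ)) (Icc 0 (1-a)) := by
    refine Complex.continuous_ofReal.comp_continuousOn ?_
    intro u hu
    have h1u : (0:ℝ) < 1 - u := by have := hu.2; simp at this ⊢; linarith
    refine ContinuousWithinAt.mono ?_ (subset_univ _)
    refine ContinuousAt.continuousWithinAt ?_
    refine ContinuousAt.mul continuousAt_const ?_
    exact (Real.continuousAt_rpow_const _ _ (Or.inl h1u.ne')).comp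
      ((continuous_const.sub continuous_id).continuousAt)
  have hφcont : ContinuousOn (fun u : ℝ => ((φ u : ℝ) : ℂ)) (Icc 0 (1-a)) := by
    refine Complex.continuous_ofReal.comp_continuousOn ?_
    intro u hu
    have h1u : (0:ℝ) < 1 - u := by have := hu.2; simp at this ⊢; linarith
    refine ContinuousAt.continuousWithinAt ?_
    exact (Real.continuousAt_rpow_const _ _ (Or.inl h1u.ne')).comp
      ((continuous_const.sub continuous_id).continuousAt)
  have hcpowcont : Continuous (fun u : ℝ => (u:ℂ) ^ s) :=
    Complex.continuous_ofReal_cpow_const hsre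
  have hFcont : ContinuousOn F (Icc 0 (1-a)) :=
    ((hcpowcont.continuousOn.div_const s).mul hφcont)
  have hT2cont : ContinuousOn T2 (Icc 0 (1-a)) :=
    ((hcpowcont.continuousOn.div_const s).mul hφ'cont)
  have hT2int : IntervalIntegrable T2 volume 0 (1-a) := by
    refine ContinuousOn.intervalIntegrable ?_
    rwa [uIcc_of_le (by linarith : (0:ℝ) ≤ 1 - a)]
  have hderiv : ∀ u ∈ Ioo (0:ℝ) (1-a), HasDerivAt F (g u + T2 u) u := by
    intro u hu
    have hu0 : u ≠ 0 := hu.1.ne'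
    have h1u : (0:ℝ) < 1 - u := by have := hu.2; linarith
    have dA : HasDerivAt (fun y : ℝ => (y:ℂ) ^ s / s) ((u:ℂ) ^ (s-1)) u := by
      have hr : s - 1 ≠ -1 := by
        intro h; apply hs0; linear_combination h
      have h := hasDerivAt_ofReal_cpow_const' hu0 hr
      simpa [sub_add_cancel] using h
    have dB : HasDerivAt (fun y : ℝ => ((φ y : ℝ) : ℂ)) ((φ' u : ℝ) : ℂ) u := by
      have dreal : HasDerivAt φ (φ' u) u := by
        have h1 := Real.hasDerivAt_rpow_const (x := 1 - u) (p := w - 1) (Or.inl h1u.ne')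
        have h2 : HasDerivAt (fun y : ℝ => 1 - y) (-1) u := (hasDerivAt_id u).const_sub 1
        have h3 := h1.comp u h2
        refine h3.congr_deriv ?_
        simp only [hφ']
        ring_nf
      exact dreal.ofReal_comp
    exact dA.mul dB
  have hFint : IntervalIntegrable (fun u => g u + T2 u) volume 0 (1-a) := hIg1.add hT2int
  have hibp : (∫ u in (0:ℝ)..(1-a), (g u + T2 u)) = F (1-a) - F 0 :=
    intervalIntegral.integral_eq_sub_of_hasDeriv_right_of_le (by linarith) hFcont
      (fun u hu => (hderiv u hu).hasDerivWithinAt) hFint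
  have hF0 : F 0 = 0 := by
    simp only [hF, Complex.ofReal_zero, Complex.zero_cpow hs0, zero_div, zero_mul]
  have hmain_eq : (∫ u in (0:ℝ)..(1-a), g u) = F (1-a) - ∫ u in (0:ℝ)..(1-a), T2 u := by
    have h := intervalIntegral.integral_add hIg1 hT2int
    rw [hibp, hF0, sub_zero] at h
    linear_combination -h
  -- bound on F (1-a)
  have haw1 : a * a ^ (w-1) = a ^ w := by
    conv_rhs => rw [show w = 1 + (w-1) by ring, Real.rpow_add ha0, Real.rpow_one]
  have hF1 : ‖F (1-a)‖ ≤ a * a ^ (w-1) := by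
    have hφ1a : φ (1-a) = a ^ (w-1) := by simp [hφ]
    have h1 : ‖F (1-a)‖ = ‖((1-a:ℝ):ℂ) ^ s‖ / ‖s‖ * a ^ (w-1) := by
      simp only [hF, norm_mul, norm_div, hφ1a]
      rw [Complex.norm_real, Real.norm_eq_abs, _root_.abs_of_nonneg (Real.rpow_nonneg ha0.le _)]
    rw [h1]
    have h2 : ‖((1-a:ℝ):ℂ) ^ s‖ ≤ 1 := by
      rw [Complex.norm_cpow_eq_rpow_re_of_pos h1a]
      exact Real.rpow_le_one h1a.le (by linarith) (by simp [hs]; linarith)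
    have h3 : ‖((1-a:ℝ):ℂ) ^ s‖ / ‖s‖ ≤ a := by
      calc ‖((1-a:ℝ):ℂ) ^ s‖ / ‖s‖
          ≤ 1 / ‖s‖ := by gcongr
        _ = (‖s‖)⁻¹ := one_div _
        _ ≤ a := hsa
    exact mul_le_mul_of_nonneg_right h3 (Real.rpow_nonneg ha0.le _)
  -- bound on the integral of T2
  have haw2 : (1:ℝ) ≤ a ^ (w-1) := by
    calc (1:ℝ) = (1:ℝ) ^ (w-1) := (Real.one_rpow _).symm
      _ ≤ a ^ (w-1) := rpow_anti ha0 ha1.le (by linarith)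
  have hφ'val : (∫ u in (0:ℝ)..(1-a), φ' u) = a ^ (w-1) - 1 := by
    simp only [hφ']
    rw [intervalIntegral.integral_const_mul]
    have h1 : (∫ u in (0:ℝ)..(1-a), (1-u) ^ (w-2)) = ∫ v in a..(1:ℝ), v ^ (w-2) := by
      have := intervalIntegral.integral_comp_sub_left (a := 0) (b := 1-a)
        (fun v : ℝ => v ^ (w-2)) 1
      simpa using this
    rw [h1, integral_rpow (Or.inr ⟨by intro h; apply hw1.ne; linarith,
      by rw [uIcc_of_le (by linarith : a ≤ 1)]; intro h; exact absurd h.1 (by linarith)⟩)]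
    have hww : w - 2 + 1 = w - 1 := by ring
    rw [hww, Real.one_rpow]
    have hwne : w - 1 ≠ 0 := sub_ne_zero.mpr hw1.ne
    field_simp [hwne]
    ring
  have hφ'int : IntervalIntegrable φ' volume 0 (1-a) := by
    refine ContinuousOn.intervalIntegrable ?_
    rw [uIcc_of_le (by linarith : (0:ℝ) ≤ 1 - a)]
    intro u hu
    have h1u : (0:ℝ) < 1 - u := by have := hu.2; linarith
    refine ContinuousAt.continuousWithinAt ?_
    exact continuousAt_const.mul ((Real.continuousAt_rpow_const _ _ (Or.inl h1u.ne')).comp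
      ((continuous_const.sub continuous_id).continuousAt))
  have hT2b : ‖∫ u in (0:ℝ)..(1-a), T2 u‖ ≤ a * a ^ (w-1) := by
    have hptw : ∀ u ∈ Icc (0:ℝ) (1-a), ‖T2 u‖ ≤ a * φ' u := by
      intro u hu
      have h1u : (0:ℝ) < 1 - u := by have := hu.2; linarith
      have hφ'0 : 0 ≤ φ' u := by
        refine mul_nonneg (by linarith) (Real.rpow_nonneg (by linarith) _)
      have hnorm : ‖T2 u‖ = ‖(u:ℂ) ^ s‖ / ‖s‖ * φ' u := by
        simp only [hT2, norm_mul, norm_div]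
        rw [Complex.norm_real, Real.norm_eq_abs, _root_.abs_of_nonneg hφ'0]
      rw [hnorm]
      have hus : ‖(u:ℂ) ^ s‖ ≤ 1 := by
        rcases eq_or_lt_of_le hu.1 with h | h
        · rw [← h]
          simp [Complex.zero_cpow hs0]
        · rw [Complex.norm_cpow_eq_rpow_re_of_pos h]
          exact Real.rpow_le_one h.le (by linarith [hu.2]) (by simp [hs]; linarith)
      have : ‖(u:ℂ) ^ s‖ / ‖s‖ ≤ a := by
        calc ‖(u:ℂ) ^ s‖ / ‖s‖ ≤ 1 / ‖s‖ := by gcongr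
          _ = (‖s‖)⁻¹ := one_div _
          _ ≤ a := hsa
      exact mul_le_mul_of_nonneg_right this hφ'0
    calc ‖∫ u in (0:ℝ)..(1-a), T2 u‖ ≤ ∫ u in (0:ℝ)..(1-a), ‖T2 u‖ :=
          intervalIntegral.norm_integral_le_integral_norm (by linarith)
      _ ≤ ∫ u in (0:ℝ)..(1-a), a * φ' u := by
          refine intervalIntegral.integral_mono_on (by linarith) hT2int.norm
            (hφ'int.const_mul a) hptw
      _ = a * (a ^ (w-1) - 1) := by rw [intervalIntegral.integral_const_mul, hφ'val]
      _ ≤ a * a ^ (w-1) := by nlinarith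
  -- assemble
  have hmainb : ‖∫ u in (0:ℝ)..(1-a), g u‖ ≤ 2 * a ^ w := by
    rw [hmain_eq]
    calc ‖F (1-a) - ∫ u in (0:ℝ)..(1-a), T2 u‖
        ≤ ‖F (1-a)‖ + ‖∫ u in (0:ℝ)..(1-a), T2 u‖ := norm_sub_le _ _
      _ ≤ a * a ^ (w-1) + a * a ^ (w-1) := add_le_add hF1 hT2b
      _ = 2 * a ^ w := by rw [haw1]; ring
  have haw : a ^ w = |t| ^ (-w) := by
    rw [ha, Real.inv_rpow (abs_nonneg t), ← Real.rpow_neg (abs_nonneg t)]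
  have hMw : 0 < w := hw
  calc ‖Complex.betaIntegral s w‖
      = ‖(∫ u in (0:ℝ)..(1-a), g u) + ∫ u in (1-a)..(1:ℝ), g u‖ := by rw [hbeta, hsplit]
    _ ≤ ‖∫ u in (0:ℝ)..(1-a), g u‖ + ‖∫ u in (1-a)..(1:ℝ), g u‖ := norm_add_le _ _
    _ ≤ 2 * a ^ w + M * (a ^ w / w) := add_le_add hmainb htail
    _ = (M / w + 2) * a ^ w := by field_simp; ring
    _ = (M / w + 2) * |t| ^ (-w) := by rw [haw]

lemma ne_zero_of_re_pos' {z : ℂ} (hz : 0 < z.re) : z ≠ 0 := by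
  intro h; rw [h] at hz; simp at hz

lemma beta_eq_Gamma {s w : ℂ} (hs : 0 < s.re) (hw : 0 < w.re) :
    Complex.betaIntegral s w = Complex.Gamma s * Complex.Gamma w / Complex.Gamma (s + w) := by
  have h := Complex.Gamma_mul_Gamma_eq_betaIntegral hs hw
  have hne : Complex.Gamma (s+w) ≠ 0 :=
    Complex.Gamma_ne_zero_of_re_pos (by rw [Complex.add_re]; linarith)
  field_simp
  linear_combination -h

lemma beta_rec {s : ℂ} {w : ℝ} (hs : 0 < s.re) (hw : 0 < w) :
    Complex.betaIntegral s ((w:ℂ) + 1) = ((w:ℂ) / (s + w)) * Complex.betaIntegral s w := by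
  have hwre : 0 < ((w:ℂ)).re := by simpa using hw
  have hw1re : 0 < ((w:ℂ)+1).re := by simp; linarith
  have hswre : 0 < (s + (w:ℂ)).re := by rw [Complex.add_re]; simpa using by linarith [hs, hw]
  rw [beta_eq_Gamma hs hw1re, beta_eq_Gamma hs hwre]
  have h1 : Complex.Gamma ((w:ℂ)+1) = w * Complex.Gamma w :=
    Complex.Gamma_add_one _ (ne_zero_of_re_pos' hwre)
  have h2 : Complex.Gamma (s + ((w:ℂ)+1)) = (s + w) * Complex.Gamma (s + w) := by
    rw [show s + ((w:ℂ)+1) = (s + w) + 1 by ring]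
    exact Complex.Gamma_add_one _ (ne_zero_of_re_pos' hswre)
  rw [h1, h2]
  have hne : Complex.Gamma (s+w) ≠ 0 := Complex.Gamma_ne_zero_of_re_pos hswre
  have hne2 : s + (w:ℂ) ≠ 0 := ne_zero_of_re_pos' hswre
  field_simp

lemma rec_step {σ w : ℝ} (hσ : 0 < σ) (hw : 0 < w) {t : ℝ} (ht : 2 ≤ |t|) :
    ‖Complex.betaIntegral ((σ:ℂ) + t * I) ((w:ℂ) + 1)‖ ≤
      w / |t| * ‖Complex.betaIntegral ((σ:ℂ) + t * I) w‖ := by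
  have hsre : 0 < ((σ:ℂ) + t * I).re := by simpa using hσ
  rw [beta_rec hsre hw, norm_mul]
  have ht2 : (0:ℝ) < |t| := by positivity
  refine mul_le_mul_of_nonneg_right ?_ (norm_nonneg _)
  have habs : |t| ≤ ‖(σ:ℂ) + t * I + w‖ := by
    have := Complex.abs_im_le_norm ((σ:ℂ) + t * I + w)
    simpa using this
  rw [norm_div, Complex.norm_real, Real.norm_eq_abs,
    _root_.abs_of_nonneg hw.le]
  exact div_le_div_of_nonneg_left hw.le ht2 habs

lemma beta_decay {σ : ℝ} (hσ : 0 < σ) : ∀ (n : ℕ) (w : ℝ), 0 < w → w ≤ n + 1 →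
    ∃ C : ℝ, 0 ≤ C ∧ ∀ t : ℝ, 2 ≤ |t| →
      ‖Complex.betaIntegral ((σ:ℂ) + t * I) ((w:ℂ) + 1)‖ ≤ C * |t| ^ (-1 - min w 1) := by
  intro n
  induction n with
  | zero =>
    intro w hw hw1
    rw [Nat.cast_zero, zero_add] at hw1
    obtain ⟨C, hC⟩ := beta_base hσ hw hw1
    have hC0 : 0 ≤ C := by
      have h1 := (norm_nonneg _).trans (hC 2 (by norm_num))
      have h2 : (0:ℝ) < |(2:ℝ)| ^ (-w) := Real.rpow_pos_of_pos (by norm_num) _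
      nlinarith
    refine ⟨w * C, by positivity, fun t ht => ?_⟩
    have ht2 : (0:ℝ) < |t| := by positivity
    calc ‖Complex.betaIntegral ((σ:ℂ) + t * I) ((w:ℂ) + 1)‖
        ≤ w / |t| * ‖Complex.betaIntegral ((σ:ℂ) + t * I) w‖ := rec_step hσ hw ht
      _ ≤ w / |t| * (C * |t| ^ (-w)) := by
          refine mul_le_mul_of_nonneg_left (hC t ht) (by positivity)
      _ = w * C * (|t| ^ (-1:ℝ) * |t| ^ (-w)) := by
          rw [Real.rpow_neg_one]
          field_simp
      _ = w * C * |t| ^ (-1 - min w 1) := by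
          rw [← Real.rpow_add ht2]
          congr 1
          rw [min_eq_left hw1]
          ring_nf
  | succ n ih =>
    intro w hw hwn
    rcases le_or_gt w (n + 1) with hle | hgt
    · exact ih w hw hle
    · have hw1 : (1:ℝ) < w := by
        have h0 : (0:ℝ) ≤ (n:ℝ) := Nat.cast_nonneg n
        linarith
      obtain ⟨C, hC0, hC⟩ := ih (w - 1) (by linarith) (by push_cast at hwn ⊢; linarith)
      refine ⟨w * C, by positivity, fun t ht => ?_⟩
      have ht2 : (0:ℝ) < |t| := by positivity
      have ht1 : (1:ℝ) ≤ |t| := by linarith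
      have hcast : ((w - 1 : ℝ) : ℂ) + 1 = (w : ℂ) := by push_cast; ring
      calc ‖Complex.betaIntegral ((σ:ℂ) + t * I) ((w:ℂ) + 1)‖
          ≤ w / |t| * ‖Complex.betaIntegral ((σ:ℂ) + t * I) w‖ := rec_step hσ hw ht
        _ ≤ w / |t| * (C * |t| ^ (-1 - min (w-1) 1)) := by
            refine mul_le_mul_of_nonneg_left ?_ (by positivity)
            rw [← hcast]
            exact hC t ht
        _ = w * C * (|t| ^ (-1:ℝ) * |t| ^ (-1 - min (w-1) 1)) := by
            rw [Real.rpow_neg_one]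
            field_simp
        _ = w * C * |t| ^ (-2 - min (w-1) 1) := by
            rw [← Real.rpow_add ht2]
            ring_nf
        _ ≤ w * C * |t| ^ (-1 - min w 1) := by
            refine mul_le_mul_of_nonneg_left ?_ (by positivity)
            refine Real.rpow_le_rpow_of_exponent_le ht1 ?_
            have hm : (0:ℝ) ≤ min (w-1) 1 := le_min (by linarith) (by norm_num)
            rw [min_eq_right hw1.le]
            linarith

lemma line_ne_neg_nat {σ t : ℝ} (hσ : 0 < σ) (m : ℕ) : (σ:ℂ) + t * I ≠ -(m:ℂ) := by
  intro h
  have hre : ((σ:ℂ) + t * I).re = (-(m:ℂ)).re := by rw [h]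
  simp at hre
  have : (0:ℝ) ≤ (m:ℝ) := Nat.cast_nonneg m
  linarith

lemma beta_continuous {σ w : ℝ} (hσ : 0 < σ) (hw : 0 < w) :
    Continuous (fun t : ℝ => Complex.betaIntegral ((σ:ℂ) + t * I) (w:ℂ)) := by
  have heq : (fun t : ℝ => Complex.betaIntegral ((σ:ℂ) + t * I) (w:ℂ)) = fun t : ℝ =>
      Complex.Gamma ((σ:ℂ) + t * I) * Complex.Gamma (w:ℂ) *
        (Complex.Gamma ((σ:ℂ) + t * I + w))⁻¹ := by
    funext t
    rw [beta_eq_Gamma (by simpa using hσ) (by simpa using hw), div_eq_mul_inv]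
  rw [heq]
  have hline : Continuous fun t : ℝ => (σ:ℂ) + t * I := by continuity
  have hG : Continuous fun t : ℝ => Complex.Gamma ((σ:ℂ) + t * I) := by
    refine continuous_iff_continuousAt.mpr fun t => ?_
    exact ContinuousAt.comp (x := t) ((Complex.differentiableAt_Gamma ((σ:ℂ) + t * I)
      (line_ne_neg_nat hσ)).continuousAt) hline.continuousAt
  have hGinv : Continuous fun t : ℝ => (Complex.Gamma ((σ:ℂ) + t * I + w))⁻¹ :=
    Complex.differentiable_one_div_Gamma.continuous.comp (by continuity)
  exact (hG.mul continuous_const).mul hGinv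

lemma beta_integrable {σ ρ : ℝ} (hσ : 0 < σ) (hρ : 0 < ρ) :
    Integrable (fun t : ℝ => Complex.betaIntegral ((σ:ℂ) + t * I) ((ρ:ℂ) + 1)) := by
  have hcont : Continuous (fun t : ℝ => Complex.betaIntegral ((σ:ℂ) + t * I) ((ρ:ℂ) + 1)) := by
    have h := beta_continuous hσ (show (0:ℝ) < ρ + 1 by linarith)
    have : ((ρ + 1 : ℝ) : ℂ) = (ρ:ℂ) + 1 := by push_cast; ring
    rwa [this] at h
  obtain ⟨C, hC0, hC⟩ := beta_decay hσ ⌈ρ⌉₊ ρ hρ (by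
    have h := Nat.le_ceil ρ
    have h2 : (0:ℝ) ≤ (⌈ρ⌉₊ : ℝ) := Nat.cast_nonneg _
    linarith)
  set m : ℝ := -1 - min ρ 1 with hm
  have hm1 : m < -1 := by
    have : 0 < min ρ 1 := lt_min hρ one_pos
    rw [hm]; linarith
  have hmaj : IntegrableOn (fun t : ℝ => C * t ^ m) (Ici (2:ℝ)) := by
    rw [integrableOn_Ici_iff_integrableOn_Ioi]
    exact (integrableOn_Ioi_rpow_of_lt hm1 (by norm_num)).const_mul C
  have h2 : IntegrableOn (fun t : ℝ => Complex.betaIntegral ((σ:ℂ) + t * I) ((ρ:ℂ) + 1))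
      (Ici (2:ℝ)) := by
    refine Integrable.mono' hmaj hcont.aestronglyMeasurable.restrict ?_
    refine (ae_restrict_iff' measurableSet_Ici).2 (ae_of_all _ fun t ht => ?_)
    rw [mem_Ici] at ht
    have habs : |t| = t := _root_.abs_of_nonneg (by linarith)
    have h := hC t (by rw [habs]; exact ht)
    rwa [habs] at h
  have hind : Integrable ((Ici (2:ℝ)).indicator (fun t => C * t ^ m)) :=
    (integrable_indicator_iff measurableSet_Ici).2 hmaj
  have hneg : Integrable (fun t : ℝ => (Ici (2:ℝ)).indicator (fun u => C * u ^ m) (-t)) := by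
    have h := (integrable_comp_mul_left_iff
      ((Ici (2:ℝ)).indicator (fun u => C * u ^ m)) (by norm_num : (-1:ℝ) ≠ 0)).2 hind
    simpa using h
  have heqI : (fun t : ℝ => (Ici (2:ℝ)).indicator (fun u => C * u ^ m) (-t))
      = (Iic (-2:ℝ)).indicator (fun t => C * (-t) ^ m) := by
    funext t
    by_cases h : t ≤ -2
    · rw [Set.indicator_of_mem (by rw [mem_Ici]; linarith), Set.indicator_of_mem (by rwa [mem_Iic])]
    · rw [Set.indicator_of_notMem (by rw [mem_Ici]; intro hh; apply h; linarith),
        Set.indicator_of_notMem (by rwa [mem_Iic])]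
  have hmaj2 : IntegrableOn (fun t : ℝ => C * (-t) ^ m) (Iic (-2:ℝ)) := by
    rw [heqI] at hneg
    exact (integrable_indicator_iff measurableSet_Iic).1 hneg
  have h3 : IntegrableOn (fun t : ℝ => Complex.betaIntegral ((σ:ℂ) + t * I) ((ρ:ℂ) + 1))
      (Iic (-2:ℝ)) := by
    refine Integrable.mono' hmaj2 hcont.aestronglyMeasurable.restrict ?_
    refine (ae_restrict_iff' measurableSet_Iic).2 (ae_of_all _ fun t ht => ?_)
    rw [mem_Iic] at ht
    have habs : |t| = -t := abs_of_nonpos (by linarith)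
    have h := hC t (by rw [habs]; linarith)
    rwa [habs] at h
  have h1 : IntegrableOn (fun t : ℝ => Complex.betaIntegral ((σ:ℂ) + t * I) ((ρ:ℂ) + 1))
      (Icc (-2:ℝ) 2) := hcont.integrableOn_Icc
  have hunion := (h3.union h1).union h2
  have hcover : (Iic (-2:ℝ) ∪ Icc (-2:ℝ) 2) ∪ Ici (2:ℝ) = univ := by
    ext x
    simp only [mem_union, mem_Iic, mem_Icc, mem_Ici, mem_univ, iff_true]
    rcases le_total x (-2) with h | h
    · exact Or.inl (Or.inl h)
    · rcases le_total x 2 with h' | h'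
      · exact Or.inl (Or.inr ⟨h, h'⟩)
      · exact Or.inr h'
  rwa [hcover, integrableOn_univ] at hunion

noncomputable def pf (ρ : ℝ) : ℝ → ℂ := fun u => (((max (1 - u) 0) ^ ρ : ℝ) : ℂ)

lemma pf_continuous {ρ : ℝ} (hρ : 0 < ρ) : Continuous (pf ρ) := by
  refine Complex.continuous_ofReal.comp ?_
  refine continuous_iff_continuousAt.mpr fun u => ?_
  exact (Real.continuousAt_rpow_const _ _ (Or.inr hρ.le)).comp
    (((continuous_const.sub continuous_id).max continuous_const).continuousAt)

lemma pf_eventually_zero {ρ : ℝ} (hρ : 0 < ρ) : ∀ u : ℝ, 1 ≤ u → pf ρ u = 0 := by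
  intro u hu
  have : max (1 - u) 0 = 0 := max_eq_right (by linarith)
  simp [pf, this, Real.zero_rpow hρ.ne']

lemma pf_norm_le_one {ρ : ℝ} (hρ : 0 < ρ) {u : ℝ} (hu : 0 ≤ u) : ‖pf ρ u‖ ≤ 1 := by
  simp only [pf, Complex.norm_real, Real.norm_eq_abs]
  rw [_root_.abs_of_nonneg (Real.rpow_nonneg (le_max_right _ _) _)]
  exact Real.rpow_le_one (le_max_right _ _) (max_le (by linarith) (by norm_num)) hρ.le

lemma pf_convergent {ρ σ : ℝ} (hρ : 0 < ρ) (hσ : 0 < σ) :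
    MellinConvergent (pf ρ) (σ:ℂ) := by
  refine mellinConvergent_of_isBigO_rpow (a := σ + 1) (b := 0)
    ((pf_continuous hρ).locallyIntegrable.locallyIntegrableOn _) ?_ (by simpa using by linarith)
    ?_ (by simpa using hσ)
  · refine Asymptotics.IsBigO.of_bound 1 ?_
    filter_upwards [eventually_ge_atTop (1:ℝ)] with u hu
    rw [pf_eventually_zero hρ u hu]
    simp only [norm_zero, one_mul]
    positivity
  · refine Asymptotics.IsBigO.of_bound 1 ?_
    filter_upwards [self_mem_nhdsWithin] with u hu
    rw [mem_Ioi] at hu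
    rw [neg_zero, Real.rpow_zero]
    simp only [norm_one, one_mul]
    exact pf_norm_le_one hρ hu.le

lemma pf_convergent' {ρ : ℝ} (hρ : 0 < ρ) {s : ℂ} (hs : 0 < s.re) :
    MellinConvergent (pf ρ) s := by
  refine mellinConvergent_of_isBigO_rpow (a := s.re + 1) (b := 0)
    ((pf_continuous hρ).locallyIntegrable.locallyIntegrableOn _) ?_ (by linarith)
    ?_ hs
  · refine Asymptotics.IsBigO.of_bound 1 ?_
    filter_upwards [eventually_ge_atTop (1:ℝ)] with u hu
    rw [pf_eventually_zero hρ u hu]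
    simp only [norm_zero, one_mul]
    positivity
  · refine Asymptotics.IsBigO.of_bound 1 ?_
    filter_upwards [self_mem_nhdsWithin] with u hu
    rw [mem_Ioi] at hu
    rw [neg_zero, Real.rpow_zero]
    simp only [norm_one, one_mul]
    exact pf_norm_le_one hρ hu.le

lemma pf_mellin {ρ : ℝ} (hρ : 0 < ρ) {s : ℂ} (hs : 0 < s.re) :
    mellin (pf ρ) s = Complex.betaIntegral s ((ρ:ℂ) + 1) := by
  have hc := pf_convergent' hρ hs
  rw [mellin]
  have hIoc : IntegrableOn (fun u : ℝ => (u:ℂ) ^ (s-1) • pf ρ u) (Ioc 0 1) :=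
    hc.mono_set Ioc_subset_Ioi_self
  have hIoi1 : IntegrableOn (fun u : ℝ => (u:ℂ) ^ (s-1) • pf ρ u) (Ioi 1) :=
    hc.mono_set (Ioi_subset_Ioi zero_le_one)
  have hsplit : Ioi (0:ℝ) = Ioc 0 1 ∪ Ioi 1 := (Ioc_union_Ioi_eq_Ioi zero_le_one).symm
  rw [hsplit, setIntegral_union (Ioc_disjoint_Ioi le_rfl) measurableSet_Ioi hIoc hIoi1]
  have h2 : (∫ u : ℝ in Ioi (1:ℝ), (u:ℂ) ^ (s-1) • pf ρ u) = 0 := by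
    have heq0 : EqOn (fun u : ℝ => (u:ℂ) ^ (s-1) • pf ρ u) 0 (Ioi 1) := fun u hu => by
      rw [mem_Ioi] at hu
      simp [pf_eventually_zero hρ u hu.le]
    rw [setIntegral_congr_fun measurableSet_Ioi heq0]
    simp
  rw [h2, add_zero, Complex.betaIntegral, intervalIntegral.integral_of_le zero_le_one]
  refine setIntegral_congr_fun measurableSet_Ioc fun u hu => ?_
  have h1u : (0:ℝ) ≤ 1 - u := by linarith [hu.2]
  simp only [pf, smul_eq_mul]
  rw [max_eq_left h1u, Complex.ofReal_cpow h1u]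
  push_cast
  ring_nf

lemma pf_vertical {ρ σ : ℝ} (hρ : 0 < ρ) (hσ : 0 < σ) :
    Complex.VerticalIntegrable (mellin (pf ρ)) σ := by
  have h := beta_integrable hσ hρ
  have heq : (fun t : ℝ => mellin (pf ρ) ((σ:ℂ) + t * I)) =
      fun t : ℝ => Complex.betaIntegral ((σ:ℂ) + t * I) ((ρ:ℂ) + 1) :=
    funext fun t => pf_mellin hρ (by simpa using hσ)
  unfold Complex.VerticalIntegrable
  rw [heq]
  exact h

lemma pf_inversion {ρ σ y : ℝ} (hρ : 0 < ρ) (hσ : 0 < σ) (hy : 0 < y) :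
    (∫ t : ℝ, (y:ℂ) ^ (-((σ:ℂ) + t * I)) * Complex.betaIntegral ((σ:ℂ) + t * I) ((ρ:ℂ) + 1))
      = ((2 * π : ℝ) : ℂ) * pf ρ y := by
  have h := mellinInv_mellin_eq σ (pf ρ) hy (pf_convergent' hρ (by simpa using hσ))
    (pf_vertical hρ hσ) (pf_continuous hρ).continuousAt
  rw [mellinInv] at h
  have heq : (fun t : ℝ => (y:ℂ) ^ (-((σ:ℂ) + t * I)) • mellin (pf ρ) ((σ:ℂ) + t * I)) =
      fun t : ℝ => (y:ℂ) ^ (-((σ:ℂ) + t * I)) * Complex.betaIntegral ((σ:ℂ) + t * I) ((ρ:ℂ) + 1) :=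
    funext fun t => by rw [smul_eq_mul, pf_mellin hρ (by simpa using hσ)]
  rw [heq] at h
  have hne : (2 * π : ℝ) ≠ 0 := by
    have := Real.pi_pos
    positivity
  calc (∫ t : ℝ, (y:ℂ) ^ (-((σ:ℂ) + t * I)) * Complex.betaIntegral ((σ:ℂ) + t * I) ((ρ:ℂ) + 1))
      = (2 * π : ℝ) • ((1/(2*π) : ℝ) •
        ∫ t : ℝ, (y:ℂ) ^ (-((σ:ℂ) + t * I)) * Complex.betaIntegral ((σ:ℂ) + t * I) ((ρ:ℂ) + 1)) := by
        rw [smul_smul, mul_one_div, div_self hne, one_smul]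
    _ = (2 * π : ℝ) • pf ρ y := by rw [h]
    _ = ((2 * π : ℝ) : ℂ) * pf ρ y := Complex.real_smul

lemma cpow_div_base {lv x : ℝ} (hl : 0 < lv) (hx : 0 < x) (s : ℂ) :
    (((lv / x : ℝ)):ℂ) ^ (-s) = (lv:ℂ) ^ (-s) * (x:ℂ) ^ s := by
  have h1 : (lv / x : ℝ) = lv * x⁻¹ := div_eq_mul_inv _ _
  rw [h1, Complex.ofReal_mul, Complex.mul_cpow_ofReal_nonneg hl.le (by positivity) (-s),
    Complex.ofReal_inv]
  congr 1
  rw [Complex.inv_cpow _ _ (by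
    rw [Complex.arg_ofReal_of_nonneg hx.le]
    exact Real.pi_ne_zero.symm), ← Complex.cpow_neg, neg_neg]

lemma integrand_eq {ρ x lv : ℝ} (hρ : 0 < ρ) (hx : 0 < x) (hl : 0 < lv) {s : ℂ}
    (hs : 0 < s.re) :
    Complex.Gamma s * ((lv:ℂ) ^ (-s)) * (x:ℂ) ^ (s + (ρ:ℂ)) / Complex.Gamma ((ρ:ℂ) + 1 + s)
      = ((x:ℂ) ^ (ρ:ℂ) / Complex.Gamma ((ρ:ℂ) + 1)) * (((lv / x : ℝ)):ℂ) ^ (-s) *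
        Complex.betaIntegral s ((ρ:ℂ) + 1) := by
  have hΓ1 : Complex.Gamma ((ρ:ℂ) + 1) ≠ 0 := by
    refine Complex.Gamma_ne_zero_of_re_pos ?_
    simp only [Complex.add_re, Complex.ofReal_re, Complex.one_re]
    linarith
  have hΓ2 : Complex.Gamma (s + ((ρ:ℂ) + 1)) ≠ 0 := by
    refine Complex.Gamma_ne_zero_of_re_pos ?_
    simp only [Complex.add_re, Complex.ofReal_re, Complex.one_re]
    linarith
  rw [beta_eq_Gamma hs (by
    simp only [Complex.add_re, Complex.ofReal_re, Complex.one_re]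
    linarith)]
  rw [cpow_div_base hl hx, Complex.cpow_add _ _ (Complex.ofReal_ne_zero.2 hx.ne'),
    show (ρ:ℂ) + 1 + s = s + ((ρ:ℂ) + 1) by ring]
  field_simp

end PerronAux

open PerronAux in
/-- Perron-type formula of Chandrasekharan–Narasimhan: if
`φ(s) = Σ aₙ λₙ^(-s)` with `Σ |aₙ| λₙ^(-α) < ∞`, then for `ρ > 0`, `σ > 0`, `σ ≥ α`
and `x > 0` not equal to any `λₙ`,
`(1/Γ(ρ+1)) Σ_{λₙ ≤ x} aₙ (x-λₙ)^ρ = (1/2πi) ∫_(σ) Γ(s) φ(s) x^(s+ρ)/Γ(ρ+1+s) ds`. -/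
theorem perron_formula (a : ℕ → ℂ) (l : ℕ → ℝ) (α ρ σ x : ℝ)
    (hl0 : ∀ n, 0 < l n) (hlmono : StrictMono l) (hltop : Tendsto l atTop atTop)
    (hsum : Summable fun n => ‖a n‖ * l n ^ (-α))
    (hρ : 0 < ρ) (hσ : 0 < σ) (hσα : α ≤ σ) (hx : 0 < x) (hxl : ∀ n, x ≠ l n) :
    (1 / Complex.Gamma ((ρ:ℂ) + 1)) *
        ∑' n : ℕ, (if l n ≤ x then a n * (((x - l n) ^ ρ : ℝ) : ℂ) else 0)
      = (1 / (2 * (π:ℂ) * Complex.I)) *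
          ∫ t : ℝ,
            Complex.Gamma ((σ:ℂ) + (t:ℂ) * Complex.I) *
              (∑' n : ℕ, a n * (l n : ℂ) ^ (-((σ:ℂ) + (t:ℂ) * Complex.I))) *
              (x:ℂ) ^ (((σ:ℂ) + (t:ℂ) * Complex.I) + (ρ:ℂ)) /
              Complex.Gamma ((ρ:ℂ) + 1 + ((σ:ℂ) + (t:ℂ) * Complex.I)) * Complex.I := by
  classical
  have hπ : (0:ℝ) < π := Real.pi_pos
  have hΓ1 : Complex.Gamma ((ρ:ℂ) + 1) ≠ 0 := by
    refine Complex.Gamma_ne_zero_of_re_pos ?_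
    simp only [Complex.add_re, Complex.ofReal_re, Complex.one_re]
    linarith
  have hSre : ∀ t : ℝ, 0 < ((σ:ℂ) + (t:ℂ) * Complex.I).re := fun t => by simpa using hσ
  set y : ℕ → ℝ := fun n => l n / x with hy
  have hy0 : ∀ n, 0 < y n := fun n => div_pos (hl0 n) hx
  set c : ℕ → ℂ := fun n => a n * (x:ℂ) ^ (ρ:ℂ) / Complex.Gamma ((ρ:ℂ) + 1) with hc
  set B : ℝ → ℂ := fun t => Complex.betaIntegral ((σ:ℂ) + (t:ℂ) * Complex.I) ((ρ:ℂ) + 1) with hB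
  set F : ℕ → ℝ → ℂ :=
    fun n t => c n * ((y n : ℝ) : ℂ) ^ (-((σ:ℂ) + (t:ℂ) * Complex.I)) * B t * Complex.I with hF
  have hBint : Integrable B := beta_integrable hσ hρ
  -- summability at σ
  have hsumσ : Summable (fun n => ‖a n‖ * l n ^ (-σ)) := by
    refine Summable.of_nonneg_of_le
      (fun n => mul_nonneg (norm_nonneg _) (Real.rpow_nonneg (hl0 n).le _)) (fun n => ?_)
      (hsum.mul_right (l 0 ^ (α - σ)))
    have h1 : l n ^ (-σ) = l n ^ (-α) * l n ^ (α - σ) := by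
      rw [← Real.rpow_add (hl0 n)]
      ring_nf
    have h2 : l n ^ (α - σ) ≤ l 0 ^ (α - σ) :=
      rpow_anti (hl0 0) (hlmono.monotone (Nat.zero_le n)) (by linarith)
    calc ‖a n‖ * l n ^ (-σ) = ‖a n‖ * l n ^ (-α) * l n ^ (α - σ) := by rw [h1]; ring
      _ ≤ ‖a n‖ * l n ^ (-α) * l 0 ^ (α - σ) := by
          refine mul_le_mul_of_nonneg_left h2
            (mul_nonneg (norm_nonneg _) (Real.rpow_nonneg (hl0 n).le _))
  -- pointwise integrand identity
  have hEt : ∀ t : ℝ,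
      Complex.Gamma ((σ:ℂ) + (t:ℂ) * Complex.I) *
        (∑' n : ℕ, a n * (l n : ℂ) ^ (-((σ:ℂ) + (t:ℂ) * Complex.I))) *
        (x:ℂ) ^ (((σ:ℂ) + (t:ℂ) * Complex.I) + (ρ:ℂ)) /
        Complex.Gamma ((ρ:ℂ) + 1 + ((σ:ℂ) + (t:ℂ) * Complex.I)) * Complex.I
      = ∑' n : ℕ, F n t := by
    intro t
    have h1 : ∀ n : ℕ,
        a n * (l n : ℂ) ^ (-((σ:ℂ) + (t:ℂ) * Complex.I)) *
          (Complex.Gamma ((σ:ℂ) + (t:ℂ) * Complex.I) *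
            (x:ℂ) ^ (((σ:ℂ) + (t:ℂ) * Complex.I) + (ρ:ℂ)) /
            Complex.Gamma ((ρ:ℂ) + 1 + ((σ:ℂ) + (t:ℂ) * Complex.I)) * Complex.I)
        = F n t := by
      intro n
      have key := integrand_eq (x := x) (lv := l n) hρ hx (hl0 n) (hSre t)
      simp only [hF, hc, hB, hy]
      linear_combination (a n * Complex.I) * key
    calc Complex.Gamma ((σ:ℂ) + (t:ℂ) * Complex.I) *
          (∑' n : ℕ, a n * (l n : ℂ) ^ (-((σ:ℂ) + (t:ℂ) * Complex.I))) *
          (x:ℂ) ^ (((σ:ℂ) + (t:ℂ) * Complex.I) + (ρ:ℂ)) /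
          Complex.Gamma ((ρ:ℂ) + 1 + ((σ:ℂ) + (t:ℂ) * Complex.I)) * Complex.I
        = (∑' n : ℕ, a n * (l n : ℂ) ^ (-((σ:ℂ) + (t:ℂ) * Complex.I))) *
            (Complex.Gamma ((σ:ℂ) + (t:ℂ) * Complex.I) *
              (x:ℂ) ^ (((σ:ℂ) + (t:ℂ) * Complex.I) + (ρ:ℂ)) /
              Complex.Gamma ((ρ:ℂ) + 1 + ((σ:ℂ) + (t:ℂ) * Complex.I)) * Complex.I) := by
          ring
      _ = ∑' n : ℕ, a n * (l n : ℂ) ^ (-((σ:ℂ) + (t:ℂ) * Complex.I)) *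
            (Complex.Gamma ((σ:ℂ) + (t:ℂ) * Complex.I) *
              (x:ℂ) ^ (((σ:ℂ) + (t:ℂ) * Complex.I) + (ρ:ℂ)) /
              Complex.Gamma ((ρ:ℂ) + 1 + ((σ:ℂ) + (t:ℂ) * Complex.I)) * Complex.I) :=
          tsum_mul_right.symm
      _ = ∑' n : ℕ, F n t := tsum_congr h1
  -- measurability
  have hmeas : ∀ n : ℕ, AEStronglyMeasurable (F n) volume := by
    intro n
    have hyne : ((y n : ℝ) : ℂ) ≠ 0 := Complex.ofReal_ne_zero.2 (hy0 n).ne'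
    have hcont1 : Continuous fun t : ℝ => ((y n : ℝ) : ℂ) ^ (-((σ:ℂ) + (t:ℂ) * Complex.I)) := by
      refine Continuous.const_cpow (by continuity) (Or.inl hyne)
    exact (((continuous_const.mul hcont1).aestronglyMeasurable.mul
      hBint.aestronglyMeasurable).mul aestronglyMeasurable_const)
  -- norm computation
  set d : ℕ → ℝ := fun n => ‖c n‖ * y n ^ (-σ) with hd
  have hd0 : ∀ n, 0 ≤ d n := fun n =>
    mul_nonneg (norm_nonneg _) (Real.rpow_nonneg (hy0 n).le _)
  have hFnorm : ∀ n t, ‖F n t‖ = d n * ‖B t‖ := by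
    intro n t
    simp only [hF, hd, norm_mul, Complex.norm_I, mul_one]
    have h1 : ‖((y n : ℝ) : ℂ) ^ (-((σ:ℂ) + (t:ℂ) * Complex.I))‖ = y n ^ (-σ) := by
      rw [Complex.norm_cpow_eq_rpow_re_of_pos (hy0 n)]
      congr 1
      simp
    rw [h1]
  -- summability of d
  have hdsum : Summable d := by
    have hdn : ∀ n, d n = (x ^ ρ * x ^ σ / ‖Complex.Gamma ((ρ:ℂ) + 1)‖) *
        (‖a n‖ * l n ^ (-σ)) := by
      intro n
      have h1 : ‖c n‖ = ‖a n‖ * x ^ ρ / ‖Complex.Gamma ((ρ:ℂ) + 1)‖ := by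
        simp only [hc, norm_div, norm_mul]
        congr 2
        rw [Complex.norm_cpow_eq_rpow_re_of_pos hx,
          Complex.ofReal_re]
      have h2 : y n ^ (-σ) = l n ^ (-σ) * x ^ σ := by
        simp only [hy]
        rw [div_eq_mul_inv, Real.mul_rpow (hl0 n).le (by positivity),
          Real.inv_rpow hx.le, Real.rpow_neg hx.le, inv_inv]
      simp only [hd]
      rw [h1, h2]
      ring
    refine Summable.congr (hsumσ.mul_left _) (fun n => (hdn n).symm)
  -- lintegral finiteness
  have hL : (∫⁻ t : ℝ, ‖B t‖₊) ≠ ⊤ := by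
    exact hBint.2.ne
  have hfin : (∑' n : ℕ, ∫⁻ t : ℝ, ‖F n t‖₊) ≠ ⊤ := by
    have hlint : ∀ n : ℕ, (∫⁻ t : ℝ, ‖F n t‖₊) = ENNReal.ofReal (d n) * ∫⁻ t : ℝ, ‖B t‖₊ := by
      intro n
      have heq : ∀ t : ℝ, (‖F n t‖₊ : ℝ≥0∞) = ENNReal.ofReal (d n) * ‖B t‖₊ := by
        intro t
        rw [← enorm_eq_nnnorm, ← enorm_eq_nnnorm, ← ofReal_norm, ← ofReal_norm, hFnorm n t,
          ENNReal.ofReal_mul (hd0 n)]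
      simp_rw [heq]
      rw [lintegral_const_mul' _ _ ENNReal.ofReal_ne_top]
    calc (∑' n : ℕ, ∫⁻ t : ℝ, ‖F n t‖₊)
        = ∑' n : ℕ, ENNReal.ofReal (d n) * ∫⁻ t : ℝ, ‖B t‖₊ := by
          exact tsum_congr hlint
      _ = (∑' n : ℕ, ENNReal.ofReal (d n)) * ∫⁻ t : ℝ, ‖B t‖₊ := ENNReal.tsum_mul_right
      _ = ENNReal.ofReal (∑' n : ℕ, d n) * ∫⁻ t : ℝ, ‖B t‖₊ := by
          rw [ENNReal.ofReal_tsum_of_nonneg hd0 hdsum]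
      _ ≠ ⊤ := ENNReal.mul_ne_top ENNReal.ofReal_ne_top hL
  -- evaluate the integrals
  have hInt : ∀ n : ℕ, (∫ t : ℝ, F n t)
      = c n * Complex.I * (((2 * π : ℝ) : ℂ) * pf ρ (y n)) := by
    intro n
    have hFn : F n = fun t : ℝ =>
        (c n * Complex.I) * (((y n : ℝ) : ℂ) ^ (-((σ:ℂ) + (t:ℂ) * Complex.I)) * B t) :=
      funext fun t => by simp only [hF]; ring
    rw [hFn, MeasureTheory.integral_const_mul]
    congr 1
    exact pf_inversion hρ hσ (hy0 n)
  -- per-term final identity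
  have h6 : ∀ n : ℕ, c n * pf ρ (y n)
      = (1 / Complex.Gamma ((ρ:ℂ) + 1)) *
          (if l n ≤ x then a n * (((x - l n) ^ ρ : ℝ) : ℂ) else 0) := by
    intro n
    by_cases hn : l n ≤ x
    · have hlt : l n < x := lt_of_le_of_ne hn (fun h => hxl n h.symm)
      have hmax : max (1 - y n) 0 = (x - l n) / x := by
        rw [max_eq_left]
        · simp only [hy]
          field_simp
        · simp only [hy]
          rw [sub_nonneg, div_le_one hx]
          exact hn
      have hpf : pf ρ (y n) = ((((x - l n) / x) ^ ρ : ℝ) : ℂ) := by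
        simp only [pf]
        rw [hmax]
      have hreal : x ^ ρ * ((x - l n) / x) ^ ρ = (x - l n) ^ ρ := by
        rw [← Real.mul_rpow hx.le (div_nonneg (by linarith) hx.le), mul_div_cancel₀ _ hx.ne']
      rw [if_pos hn, hpf]
      simp only [hc]
      rw [← Complex.ofReal_cpow hx.le]
      calc a n * ((x ^ ρ : ℝ) : ℂ) / Complex.Gamma ((ρ:ℂ) + 1) * ((((x - l n) / x) ^ ρ : ℝ) : ℂ)
          = (1 / Complex.Gamma ((ρ:ℂ) + 1)) *
            (a n * (((x ^ ρ * ((x - l n) / x) ^ ρ : ℝ)) : ℂ)) := by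
            push_cast
            ring
        _ = (1 / Complex.Gamma ((ρ:ℂ) + 1)) * (a n * (((x - l n) ^ ρ : ℝ) : ℂ)) := by
            rw [hreal]
    · have hlt : x < l n := not_le.1 hn
      have hpf : pf ρ (y n) = 0 := by
        simp only [pf]
        rw [max_eq_right, Real.zero_rpow hρ.ne']
        · simp
        · simp only [hy]
          rw [sub_nonpos]
          rw [le_div_iff₀ hx]
          linarith
      rw [if_neg hn, hpf, mul_zero, mul_zero]
  -- assemble
  have hRHS : (1 / (2 * (π:ℂ) * Complex.I)) *
      (∫ t : ℝ,
        Complex.Gamma ((σ:ℂ) + (t:ℂ) * Complex.I) *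
          (∑' n : ℕ, a n * (l n : ℂ) ^ (-((σ:ℂ) + (t:ℂ) * Complex.I))) *
          (x:ℂ) ^ (((σ:ℂ) + (t:ℂ) * Complex.I) + (ρ:ℂ)) /
          Complex.Gamma ((ρ:ℂ) + 1 + ((σ:ℂ) + (t:ℂ) * Complex.I)) * Complex.I)
      = (1 / Complex.Gamma ((ρ:ℂ) + 1)) *
        ∑' n : ℕ, (if l n ≤ x then a n * (((x - l n) ^ ρ : ℝ) : ℂ) else 0) := by
    rw [show (fun t : ℝ =>
        Complex.Gamma ((σ:ℂ) + (t:ℂ) * Complex.I) *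
          (∑' n : ℕ, a n * (l n : ℂ) ^ (-((σ:ℂ) + (t:ℂ) * Complex.I))) *
          (x:ℂ) ^ (((σ:ℂ) + (t:ℂ) * Complex.I) + (ρ:ℂ)) /
          Complex.Gamma ((ρ:ℂ) + 1 + ((σ:ℂ) + (t:ℂ) * Complex.I)) * Complex.I)
        = fun t : ℝ => ∑' n : ℕ, F n t from funext hEt]
    rw [MeasureTheory.integral_tsum hmeas hfin]
    rw [show (fun n : ℕ => ∫ t : ℝ, F n t)
        = fun n : ℕ => c n * Complex.I * (((2 * π : ℝ) : ℂ) * pf ρ (y n)) from funext hInt]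
    rw [← tsum_mul_left]
    have h5 : ∀ n : ℕ, (1 / (2 * (π:ℂ) * Complex.I)) *
        (c n * Complex.I * (((2 * π : ℝ) : ℂ) * pf ρ (y n))) = c n * pf ρ (y n) := by
      intro n
      have hπc : (π:ℂ) ≠ 0 := Complex.ofReal_ne_zero.2 hπ.ne'
      push_cast
      field_simp
    rw [tsum_congr h5, tsum_congr h6, tsum_mul_left]
  exact hRHS.symm
end

section
/- Let f(z) be continuous on the half-strips S = {z = x+iy : a ≤ x ≤ b, |y| > η}, analytic in the interior, and satisfying f(z) = O(e^{ε|y|}) in S for every ε > 0. If f(a+iy) = O(|y|^{k₁}) and f(b+iy) = O(|y|^{k₂}) for |y| > η, then f(x+iy) = O(|y|^{((k₁−k₂)x + k₂a − k₁b)/(a−b)}) uniformly for x ∈ [a,b], |y| > η. -/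
open MeasureTheory Real Set Filter Asymptotics
open Bornology

private lemma jordan_nonneg {θ : ℝ} (h0 : 0 ≤ θ) (h : θ ≤ π / 2) :
    θ ≤ π / 2 * Real.sin θ := by
  rcases eq_or_lt_of_le h0 with h0' | h0'
  · simp [← h0']
  rcases eq_or_lt_of_le h with h' | h'
  · rw [h', Real.sin_pi_div_two]; linarith
  have h1 := Real.mul_lt_sin h0' h'
  have hπ := Real.pi_pos
  have h2 : π / 2 * (2 / π * θ) ≤ π / 2 * Real.sin θ :=
    mul_le_mul_of_nonneg_left h1.le (by positivity)
  have h3 : π / 2 * (2 / π * θ) = θ := by field_simp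
  linarith

private lemma jordan_abs {θ : ℝ} (h : |θ| ≤ π / 2) : |θ| ≤ π / 2 * |Real.sin θ| := by
  have hπ := Real.pi_pos
  rcases le_or_gt 0 θ with hθ | hθ
  · rw [abs_of_nonneg hθ]
    have h1 := jordan_nonneg hθ ((le_abs_self θ).trans h)
    have hs : 0 ≤ Real.sin θ :=
      Real.sin_nonneg_of_nonneg_of_le_pi hθ (by linarith [(le_abs_self θ).trans h])
    rwa [abs_of_nonneg hs]
  · rw [abs_of_neg hθ]
    have h2 : -θ ≤ π / 2 := (neg_le_abs θ).trans h
    have h1 := jordan_nonneg (by linarith) h2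
    rw [Real.sin_neg] at h1
    have hs : Real.sin θ ≤ 0 := by
      have := Real.sin_nonneg_of_nonneg_of_le_pi (by linarith : (0:ℝ) ≤ -θ) (by linarith)
      rw [Real.sin_neg] at this; linarith
    rw [abs_of_nonpos hs]; linarith

private lemma re_mul_arg_le {w : ℂ} (hre : 0 < w.re) :
    |w.re * Complex.arg w| ≤ π / 2 * |w.im| := by
  have hw : w ≠ 0 := fun h => by simp [h] at hre
  have habs : 0 < ‖w‖ := norm_pos_iff.mpr hw
  have harg : |Complex.arg w| ≤ π / 2 := Complex.abs_arg_le_pi_div_two_iff.2 hre.le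
  have hsin : Real.sin (Complex.arg w) = w.im / ‖w‖ := Complex.sin_arg w
  have h1 : |Complex.arg w| ≤ π / 2 * (|w.im| / ‖w‖) := by
    have := jordan_abs harg
    rwa [hsin, abs_div, abs_of_pos habs] at this
  have hre_le : |w.re| ≤ ‖w‖ := Complex.abs_re_le_norm w
  rw [abs_mul]
  calc |w.re| * |Complex.arg w| ≤ ‖w‖ * (π / 2 * (|w.im| / ‖w‖)) :=
        mul_le_mul hre_le h1 (abs_nonneg _) habs.le
    _ = π / 2 * |w.im| := by field_simp

private lemma poly_le_exp (Λ s : ℝ) (hs : 0 < s) :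
    ∃ C : ℝ, ∀ y : ℝ, 1 ≤ y → Real.exp (Λ * Real.log y) ≤ C * Real.exp (s * y) := by
  set Λ' : ℝ := |Λ| + 1 with hΛ'
  have hΛ0 : 0 < Λ' := by positivity
  set c : ℝ := s / Λ' with hc
  have hc0 : 0 < c := by positivity
  refine ⟨Real.exp (-Λ' * (1 + Real.log c)), fun y hy => ?_⟩
  have hy0 : 0 < y := by linarith
  have hlog : 0 ≤ Real.log y := Real.log_nonneg hy
  have h1 : Λ * Real.log y ≤ Λ' * Real.log y := by
    apply mul_le_mul_of_nonneg_right _ hlog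
    calc Λ ≤ |Λ| := le_abs_self Λ
      _ ≤ Λ' := by simp [hΛ']
  have h2 : Real.log y ≤ c * y - 1 - Real.log c := by
    have := Real.log_le_sub_one_of_pos (mul_pos hc0 hy0)
    rw [Real.log_mul hc0.ne' hy0.ne'] at this
    linarith
  have h3 : Λ' * Real.log y ≤ s * y + (-Λ' * (1 + Real.log c)) := by
    have := mul_le_mul_of_nonneg_left h2 hΛ0.le
    have hcy : Λ' * (c * y) = s * y := by rw [hc]; field_simp
    nlinarith
  rw [← Real.exp_add]
  calc Real.exp (Λ * Real.log y) ≤ Real.exp (s * y + -Λ' * (1 + Real.log c)) :=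
        Real.exp_le_exp.2 (h1.trans h3)
    _ = Real.exp (-Λ' * (1 + Real.log c) + s * y) := by ring_nf


private lemma halfstrip_max {f : ℂ → ℂ} {a b η M : ℝ} (hab : a < b) (hη : 0 < η) (hM : 0 ≤ M)
    (hcont : ContinuousOn f {z : ℂ | a ≤ z.re ∧ z.re ≤ b ∧ η ≤ z.im})
    (hdiff : DifferentiableOn ℂ f {z : ℂ | a < z.re ∧ z.re < b ∧ η < z.im})
    (hgrow : ∀ ε : ℝ, 0 < ε → ∃ C : ℝ, 0 ≤ C ∧ ∀ z : ℂ, a ≤ z.re → z.re ≤ b → η ≤ z.im →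
      ‖f z‖ ≤ C * Real.exp (ε * z.im))
    (hbd : ∀ z : ℂ, a ≤ z.re → z.re ≤ b → η ≤ z.im →
      (z.re = a ∨ z.re = b ∨ z.im = η) → ‖f z‖ ≤ M) :
    ∀ z : ℂ, a ≤ z.re → z.re ≤ b → η ≤ z.im → ‖f z‖ ≤ M := by
  intro z₀ hz₀a hz₀b hz₀η
  have key : ∀ δ : ℝ, 0 < δ → ‖f z₀‖ * Real.exp (-δ * z₀.im) ≤ M := by
    intro δ hδ
    obtain ⟨C, hC0, hC⟩ := hgrow (δ / 2) (by linarith)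
    set g : ℂ → ℂ := fun w => f w * Complex.exp (δ * Complex.I * w) with hg
    have hgnorm : ∀ w : ℂ, ‖g w‖ = ‖f w‖ * Real.exp (-δ * w.im) := by
      intro w
      rw [hg]
      simp only [norm_mul, Complex.norm_exp]
      congr 2
      simp [Complex.mul_re, Complex.mul_im]
    have main : ∀ Y : ℝ, max η z₀.im < Y → ‖g z₀‖ ≤ max M (C * Real.exp (-(δ / 2) * Y)) := by
      intro Y hY
      have hηY : η < Y := lt_of_le_of_lt (le_max_left _ _) hY
      set U : Set ℂ := Ioo a b ×ℂ Ioo η Y with hU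
      have hUsub : U ⊆ {z : ℂ | a < z.re ∧ z.re < b ∧ η < z.im} := by
        intro w hw
        rw [hU, Complex.mem_reProdIm] at hw
        exact ⟨hw.1.1, hw.1.2, hw.2.1⟩
      have hclU : closure U = Icc a b ×ℂ Icc η Y := by
        rw [hU, Complex.closure_reProdIm, closure_Ioo hab.ne, closure_Ioo hηY.ne]
      have hclsub : closure U ⊆ {z : ℂ | a ≤ z.re ∧ z.re ≤ b ∧ η ≤ z.im} := by
        rw [hclU]
        intro w hw
        rw [Complex.mem_reProdIm] at hw
        exact ⟨hw.1.1, hw.1.2, hw.2.1⟩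
      have hbound : IsBounded U := by
        apply (Metric.isBounded_closedBall (x := (0:ℂ)) (r := |a| + |b| + |η| + |Y|)).subset
        intro w hw
        rw [hU, Complex.mem_reProdIm] at hw
        simp only [Metric.mem_closedBall, dist_zero_right]
        have h1 : |w.re| ≤ |a| + |b| :=
          abs_le.2 ⟨by have := neg_abs_le a; have := abs_nonneg b; have := hw.1.1; linarith,
            by have := le_abs_self b; have := abs_nonneg a; have := hw.1.2; linarith⟩
        have h2 : |w.im| ≤ |η| + |Y| :=
          abs_le.2 ⟨by have := neg_abs_le η; have := abs_nonneg Y; have := hw.2.1; linarith,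
            by have := le_abs_self Y; have := abs_nonneg η; have := hw.2.2; linarith⟩
        calc ‖w‖ ≤ |w.re| + |w.im| := Complex.norm_le_abs_re_add_abs_im w
          _ ≤ |a| + |b| + (|η| + |Y|) := add_le_add h1 h2
          _ = |a| + |b| + |η| + |Y| := by ring
      have hgd : DiffContOnCl ℂ g U := by
        constructor
        · apply DifferentiableOn.mul ((hdiff.mono hUsub))
          apply Differentiable.differentiableOn
          apply Complex.differentiable_exp.comp
          exact (differentiable_const _).mul differentiable_id
        · apply ContinuousOn.mul (hcont.mono hclsub)
          exact (Complex.continuous_exp.comp ((continuous_const.mul continuous_id))).continuousOn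
      have hfr : ∀ w ∈ frontier U, ‖g w‖ ≤ max M (C * Real.exp (-(δ / 2) * Y)) := by
        intro w hw
        rw [hU, Complex.frontier_reProdIm, closure_Ioo hab.ne, closure_Ioo hηY.ne,
          frontier_Ioo hab, frontier_Ioo hηY] at hw
        rcases hw with hw | hw <;> rw [Complex.mem_reProdIm] at hw
        · -- re ∈ Icc a b, im ∈ {η, Y}
          rcases hw.2 with him | him
          · -- im = η : boundary bound
            have hb1 : ‖f w‖ ≤ M := hbd w hw.1.1 hw.1.2 (le_of_eq him.symm)
              (Or.inr (Or.inr him))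
            rw [hgnorm]
            refine le_trans ?_ (le_max_left _ _)
            calc ‖f w‖ * Real.exp (-δ * w.im) ≤ M * 1 := by
                  apply mul_le_mul hb1 _ (Real.exp_pos _).le hM
                  rw [Real.exp_le_one_iff]
                  have : η ≤ w.im := le_of_eq him.symm
                  nlinarith
              _ = M := mul_one M
          · -- im = Y : growth bound
            have hwη : η ≤ w.im := him ▸ hηY.le
            have hb1 : ‖f w‖ ≤ C * Real.exp (δ / 2 * w.im) := hC w hw.1.1 hw.1.2 hwη
            rw [hgnorm]
            refine le_trans ?_ (le_max_right _ _)
            calc ‖f w‖ * Real.exp (-δ * w.im)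
                ≤ C * Real.exp (δ / 2 * w.im) * Real.exp (-δ * w.im) := by
                  apply mul_le_mul_of_nonneg_right hb1 (Real.exp_pos _).le
              _ = C * Real.exp (-(δ / 2) * w.im) := by
                  rw [mul_assoc, ← Real.exp_add]; ring_nf
              _ = C * Real.exp (-(δ / 2) * Y) := by rw [him]
        · -- re ∈ {a, b}, im ∈ Icc η Y
          have hwη : η ≤ w.im := hw.2.1
          have hre : a ≤ w.re ∧ w.re ≤ b := by
            rcases hw.1 with h | h
            · rw [h]; exact ⟨le_refl _, hab.le⟩
            · rw [h]; exact ⟨hab.le, le_refl _⟩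
          have hb1 : ‖f w‖ ≤ M := by
            apply hbd w hre.1 hre.2 hwη
            rcases hw.1 with h | h
            · exact Or.inl h
            · exact Or.inr (Or.inl h)
          rw [hgnorm]
          refine le_trans ?_ (le_max_left _ _)
          calc ‖f w‖ * Real.exp (-δ * w.im) ≤ M * 1 := by
                apply mul_le_mul hb1 _ (Real.exp_pos _).le hM
                rw [Real.exp_le_one_iff]
                nlinarith
            _ = M := mul_one M
      have hz₀cl : z₀ ∈ closure U := by
        rw [hclU, Complex.mem_reProdIm]
        exact ⟨⟨hz₀a, hz₀b⟩, ⟨hz₀η, le_of_lt (lt_of_le_of_lt (le_max_right _ _) hY)⟩⟩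
      exact Complex.norm_le_of_forall_mem_frontier_norm_le hbound hgd hfr hz₀cl
    -- let Y → ∞
    have hlim : Tendsto (fun Y : ℝ => max M (C * Real.exp (-(δ / 2) * Y))) atTop (nhds (max M 0)) := by
      apply Tendsto.max tendsto_const_nhds
      rw [show (0:ℝ) = C * 0 by ring]
      apply Tendsto.const_mul
      apply Real.tendsto_exp_atBot.comp
      apply Tendsto.const_mul_atTop_of_neg (by linarith : -(δ/2) < 0) tendsto_id
    rw [max_eq_left hM] at hlim
    have hev : ∀ᶠ Y in atTop, ‖g z₀‖ ≤ max M (C * Real.exp (-(δ / 2) * Y)) := by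
      filter_upwards [eventually_gt_atTop (max η z₀.im)] with Y hY using main Y hY
    have := ge_of_tendsto hlim hev
    rwa [hgnorm z₀] at this
  -- let δ → 0⁺
  have hlim : Tendsto (fun δ : ℝ => ‖f z₀‖ * Real.exp (-δ * z₀.im)) (nhdsWithin 0 (Ioi 0))
      (nhds (‖f z₀‖)) := by
    have hcont2 : Continuous fun δ : ℝ => ‖f z₀‖ * Real.exp (-δ * z₀.im) := by
      continuity
    have := hcont2.tendsto 0
    simp only [neg_zero, zero_mul, Real.exp_zero, mul_one] at this
    exact this.mono_left nhdsWithin_le_nhds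
  apply le_of_tendsto hlim
  filter_upwards [self_mem_nhdsWithin] with δ hδ using key δ hδ


set_option maxHeartbeats 2000000 in
private lemma upper_halfstrip (f : ℂ → ℂ) (a b η k₁ k₂ : ℝ) (hab : a < b) (hη : 0 < η)
    (hcont : ContinuousOn f {z : ℂ | a ≤ z.re ∧ z.re ≤ b ∧ η < z.im})
    (hanal : DifferentiableOn ℂ f {z : ℂ | a < z.re ∧ z.re < b ∧ η < z.im})
    (hexp : ∀ ε : ℝ, 0 < ε → ∃ C : ℝ, ∀ z : ℂ, a ≤ z.re → z.re ≤ b → η < z.im →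
        ‖f z‖ ≤ C * Real.exp (ε * z.im))
    (ha : ∃ C₁ : ℝ, ∀ y : ℝ, η < y →
        ‖f ((a:ℂ) + (y:ℂ) * Complex.I)‖ ≤ C₁ * Real.exp (k₁ * Real.log y))
    (hb : ∃ C₂ : ℝ, ∀ y : ℝ, η < y →
        ‖f ((b:ℂ) + (y:ℂ) * Complex.I)‖ ≤ C₂ * Real.exp (k₂ * Real.log y)) :
    ∃ C : ℝ, ∀ z : ℂ, a ≤ z.re → z.re ≤ b → η < z.im →
      ‖f z‖ ≤ C * Real.exp ((((k₁ - k₂) * z.re + k₂ * a - k₁ * b) / (a - b)) * Real.log z.im) := by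
  obtain ⟨C₁, hC₁⟩ := ha
  obtain ⟨C₂, hC₂⟩ := hb
  obtain ⟨C₀, hC₀⟩ := hexp 1 one_pos
  have hne : a - b ≠ 0 := sub_ne_zero.2 hab.ne
  set α : ℝ := (k₁ - k₂) / (a - b) with hα
  set β : ℝ := (k₂ * a - k₁ * b) / (a - b) with hβ
  have hL : ∀ x : ℝ, ((k₁ - k₂) * x + k₂ * a - k₁ * b) / (a - b) = α * x + β := by
    intro x; rw [hα, hβ]; field_simp; ring
  have hLa : α * a + β = k₁ := by rw [hα, hβ]; field_simp; ring
  have hLb : α * b + β = k₂ := by rw [hα, hβ]; field_simp; ring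
  set η' : ℝ := η + 1 with hη'
  have hη'1 : 1 ≤ η' := by rw [hη']; linarith
  have hη'pos : 0 < η' := by linarith
  set M₀ : ℝ := |a| + |b| with hM₀
  have hM₀0 : 0 ≤ M₀ := by positivity
  set Λ : ℝ := |α| * M₀ + |β| with hΛ
  have hΛ0 : 0 ≤ Λ := by positivity
  set K : ℝ := M₀ + 1 with hK
  have hK1 : 1 ≤ K := by linarith
  have hlogK : 0 ≤ Real.log K := Real.log_nonneg hK1
  set A : ℝ := |α| * (π / 2) * M₀ with hA
  have hA0 : 0 ≤ A := by positivity
  -- basic bounds on |L x| for x ∈ [a, b]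
  have hLbound : ∀ x : ℝ, a ≤ x → x ≤ b → |α * x + β| ≤ Λ := by
    intro x h1 h2
    rw [hΛ]
    have hx : |x| ≤ M₀ :=
      abs_le.2 ⟨by have := neg_abs_le a; have := abs_nonneg b; rw [hM₀]; linarith,
        by have := le_abs_self b; have := abs_nonneg a; rw [hM₀]; linarith⟩
    calc |α * x + β| ≤ |α * x| + |β| := abs_add_le _ _
      _ = |α| * |x| + |β| := by rw [abs_mul]
      _ ≤ |α| * M₀ + |β| := by
          have := mul_le_mul_of_nonneg_left hx (abs_nonneg α); linarith
  -- the auxiliary function F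
  set F : ℂ → ℂ := fun z =>
    f z * Complex.exp (-((α:ℂ) * z + (β:ℂ)) * Complex.log (-Complex.I * z)) with hF
  -- norm identity
  have hFnorm : ∀ z : ℂ, 0 < z.im → ‖F z‖ =
      ‖f z‖ * Real.exp (-((α * z.re + β) * Real.log (‖z‖))
        + α * z.im * Complex.arg (-Complex.I * z)) := by
    intro z hz
    have habs : ‖-Complex.I * z‖ = ‖z‖ := by
      simp [map_mul]
    rw [hF]
    simp only [norm_mul, Complex.norm_exp]
    congr 2
    rw [Complex.mul_re, Complex.log_re, Complex.log_im, habs]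
    simp only [Complex.neg_re, Complex.neg_im, Complex.add_re, Complex.add_im,
      Complex.mul_re, Complex.mul_im, Complex.ofReal_re, Complex.ofReal_im]
    ring
  -- bound the arg term
  have hargbd : ∀ z : ℂ, a ≤ z.re → z.re ≤ b → 0 < z.im →
      |α * z.im * Complex.arg (-Complex.I * z)| ≤ A := by
    intro z h1 h2 h3
    have hre : (-Complex.I * z).re = z.im := by
      simp [Complex.mul_re]
    have him : (-Complex.I * z).im = -z.re := by
      simp [Complex.mul_im]
    have := re_mul_arg_le (w := -Complex.I * z) (by rw [hre]; exact h3)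
    rw [hre, him, abs_neg] at this
    have hx : |z.re| ≤ M₀ :=
      abs_le.2 ⟨by have := neg_abs_le a; have := abs_nonneg b; rw [hM₀]; linarith,
        by have := le_abs_self b; have := abs_nonneg a; rw [hM₀]; linarith⟩
    calc |α * z.im * Complex.arg (-Complex.I * z)|
        = |α| * |z.im * Complex.arg (-Complex.I * z)| := by
          rw [mul_assoc, abs_mul]
      _ ≤ |α| * (π / 2 * |z.re|) := mul_le_mul_of_nonneg_left this (abs_nonneg α)
      _ ≤ A := by
          rw [hA]
          have h4 : π / 2 * |z.re| ≤ π / 2 * M₀ :=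
            mul_le_mul_of_nonneg_left hx (by positivity)
          have := mul_le_mul_of_nonneg_left h4 (abs_nonneg α)
          linarith [this]
  -- comparison of log (abs z) and log (im z) for im z ≥ η'
  have hloglog : ∀ z : ℂ, a ≤ z.re → z.re ≤ b → η' ≤ z.im →
      Real.log z.im ≤ Real.log (‖z‖) ∧
      Real.log (‖z‖) ≤ Real.log K + Real.log z.im := by
    intro z h1 h2 h3
    have hzim : (0:ℝ) < z.im := lt_of_lt_of_le hη'pos h3
    have hzim1 : (1:ℝ) ≤ z.im := le_trans hη'1 h3
    have hlow : z.im ≤ ‖z‖ := by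
      have := Complex.abs_im_le_norm z
      rwa [abs_of_pos hzim] at this
    have habs0 : 0 < ‖z‖ := lt_of_lt_of_le hzim hlow
    have hx : |z.re| ≤ M₀ :=
      abs_le.2 ⟨by have := neg_abs_le a; have := abs_nonneg b; rw [hM₀]; linarith,
        by have := le_abs_self b; have := abs_nonneg a; rw [hM₀]; linarith⟩
    have hup : ‖z‖ ≤ K * z.im := by
      calc ‖z‖ ≤ |z.re| + |z.im| := Complex.norm_le_abs_re_add_abs_im z
        _ ≤ M₀ + z.im := by rw [abs_of_pos hzim]; linarith
        _ ≤ K * z.im := by rw [hK]; nlinarith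
    constructor
    · exact Real.log_le_log hzim hlow
    · calc Real.log (‖z‖) ≤ Real.log (K * z.im) := Real.log_le_log habs0 hup
        _ = Real.log K + Real.log z.im := Real.log_mul (by linarith) (by linarith)
  -- helper for multiplying bounds with exponentials
  have mul_exp_le : ∀ {c d u v : ℝ}, 0 ≤ d → c ≤ d → u ≤ v →
      c * Real.exp u ≤ d * Real.exp v := by
    intro c d u v hd hcd huv
    exact mul_le_mul hcd (Real.exp_le_exp.2 huv) (Real.exp_pos _).le hd
  -- nonnegativity of the constants
  have hC₁0 : 0 ≤ C₁ := by
    have h := hC₁ (η + 1) (by linarith)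
    exact (mul_nonneg_iff_of_pos_right (Real.exp_pos _)).1 ((norm_nonneg _).trans h)
  have hC₂0 : 0 ≤ C₂ := by
    have h := hC₂ (η + 1) (by linarith)
    exact (mul_nonneg_iff_of_pos_right (Real.exp_pos _)).1 ((norm_nonneg _).trans h)
  have hC₀0 : 0 ≤ C₀ := by
    have h : ‖f ⟨a, η + 1⟩‖ ≤ C₀ * Real.exp (1 * (η + 1)) :=
      hC₀ ⟨a, η + 1⟩ le_rfl hab.le (by norm_num)
    exact (mul_nonneg_iff_of_pos_right (Real.exp_pos _)).1 ((norm_nonneg _).trans h)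
  -- expressing f from F
  have hf_from_F : ∀ z : ℂ, 0 < z.im → ‖f z‖ =
      ‖F z‖ * Real.exp ((α * z.re + β) * Real.log (‖z‖)
        - α * z.im * Complex.arg (-Complex.I * z)) := by
    intro z hz
    rw [hFnorm z hz, mul_assoc, ← Real.exp_add,
      show -((α * z.re + β) * Real.log (‖z‖))
          + α * z.im * Complex.arg (-Complex.I * z)
          + ((α * z.re + β) * Real.log (‖z‖)
          - α * z.im * Complex.arg (-Complex.I * z)) = 0 by ring,
      Real.exp_zero, mul_one]
  -- the boundary constants
  set D : ℝ := Λ * Real.log K with hD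
  have hD0 : 0 ≤ D := mul_nonneg hΛ0 hlogK
  set M₁ : ℝ := C₁ * Real.exp (D + A) with hM₁
  set M₂ : ℝ := C₂ * Real.exp (D + A) with hM₂
  set M₃ : ℝ := C₀ * Real.exp (η' + Λ * (Real.log K + Real.log η') + A) with hM₃
  set M : ℝ := max (max M₁ M₂) M₃ with hM
  have hM0 : 0 ≤ M := by
    have : 0 ≤ M₁ := mul_nonneg hC₁0 (Real.exp_pos _).le
    exact le_trans this ((le_max_left _ _).trans (le_max_left _ _))
  -- boundary bound for F
  have hbdF : ∀ z : ℂ, a ≤ z.re → z.re ≤ b → η' ≤ z.im →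
      (z.re = a ∨ z.re = b ∨ z.im = η') → ‖F z‖ ≤ M := by
    intro z h1 h2 h3 hcase
    have hzim : 0 < z.im := lt_of_lt_of_le hη'pos h3
    have hzη : η < z.im := by rw [hη'] at h3; linarith
    have hv := hargbd z h1 h2 hzim
    obtain ⟨hd1, hd2⟩ := hloglog z h1 h2 h3
    have hLz := hLbound z.re h1 h2
    rcases hcase with hre | hre | him
    · -- left edge
      have hfz : ‖f z‖ ≤ C₁ * Real.exp (k₁ * Real.log z.im) := by
        have := hC₁ z.im hzη
        rwa [← hre, Complex.re_add_im] at this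
      rw [hFnorm z hzim]
      calc ‖f z‖ * Real.exp (-((α * z.re + β) * Real.log (‖z‖))
            + α * z.im * Complex.arg (-Complex.I * z))
          ≤ (C₁ * Real.exp (k₁ * Real.log z.im)) * Real.exp (-((α * z.re + β)
            * Real.log (‖z‖)) + α * z.im * Complex.arg (-Complex.I * z)) :=
            mul_le_mul_of_nonneg_right hfz (Real.exp_pos _).le
        _ = C₁ * Real.exp (k₁ * Real.log z.im - (α * z.re + β) * Real.log (‖z‖)
            + α * z.im * Complex.arg (-Complex.I * z)) := by
            rw [mul_assoc, ← Real.exp_add]; ring_nf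
        _ ≤ M₁ := by
            rw [hM₁]
            apply mul_exp_le hC₁0 le_rfl
            have hk : |α * z.re + β| = |k₁| := by rw [hre, hLa]
            have hk' : |k₁| ≤ Λ := by rw [← hk]; exact hLz
            obtain ⟨hk1, hk2⟩ := abs_le.mp hk'
            obtain ⟨hv1, hv2⟩ := abs_le.mp hv
            rw [hre, hLa, hD]
            have ht0 : 0 ≤ Real.log (‖z‖) - Real.log z.im := sub_nonneg.2 hd1
            have htK : Real.log (‖z‖) - Real.log z.im ≤ Real.log K := by linarith
            have hp2 : Λ * (Real.log (‖z‖) - Real.log z.im) ≤ Λ * Real.log K :=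
              mul_le_mul_of_nonneg_left htK hΛ0
            have hp1 : (-k₁) * (Real.log (‖z‖) - Real.log z.im)
                ≤ Λ * (Real.log (‖z‖) - Real.log z.im) :=
              mul_le_mul_of_nonneg_right (by linarith) ht0
            linarith [hp1, hp2, hv2]
        _ ≤ M := (le_max_left _ _).trans (le_max_left _ _)
    · -- right edge
      have hfz : ‖f z‖ ≤ C₂ * Real.exp (k₂ * Real.log z.im) := by
        have := hC₂ z.im hzη
        rwa [← hre, Complex.re_add_im] at this
      rw [hFnorm z hzim]
      calc ‖f z‖ * Real.exp (-((α * z.re + β) * Real.log (‖z‖))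
            + α * z.im * Complex.arg (-Complex.I * z))
          ≤ (C₂ * Real.exp (k₂ * Real.log z.im)) * Real.exp (-((α * z.re + β)
            * Real.log (‖z‖)) + α * z.im * Complex.arg (-Complex.I * z)) :=
            mul_le_mul_of_nonneg_right hfz (Real.exp_pos _).le
        _ = C₂ * Real.exp (k₂ * Real.log z.im - (α * z.re + β) * Real.log (‖z‖)
            + α * z.im * Complex.arg (-Complex.I * z)) := by
            rw [mul_assoc, ← Real.exp_add]; ring_nf
        _ ≤ M₂ := by
            rw [hM₂]
            apply mul_exp_le hC₂0 le_rfl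
            have hk : |α * z.re + β| = |k₂| := by rw [hre, hLb]
            have hk' : |k₂| ≤ Λ := by rw [← hk]; exact hLz
            obtain ⟨hk1, hk2⟩ := abs_le.mp hk'
            obtain ⟨hv1, hv2⟩ := abs_le.mp hv
            rw [hre, hLb, hD]
            have ht0 : 0 ≤ Real.log (‖z‖) - Real.log z.im := sub_nonneg.2 hd1
            have htK : Real.log (‖z‖) - Real.log z.im ≤ Real.log K := by linarith
            have hp2 : Λ * (Real.log (‖z‖) - Real.log z.im) ≤ Λ * Real.log K :=
              mul_le_mul_of_nonneg_left htK hΛ0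
            have hp1 : (-k₂) * (Real.log (‖z‖) - Real.log z.im)
                ≤ Λ * (Real.log (‖z‖) - Real.log z.im) :=
              mul_le_mul_of_nonneg_right (by linarith) ht0
            linarith [hp1, hp2, hv2]
        _ ≤ M := (le_max_right _ _).trans (le_max_left _ _)
    · -- bottom edge
      have hfz : ‖f z‖ ≤ C₀ * Real.exp (1 * z.im) := hC₀ z h1 h2 hzη
      rw [hFnorm z hzim]
      calc ‖f z‖ * Real.exp (-((α * z.re + β) * Real.log (‖z‖))
            + α * z.im * Complex.arg (-Complex.I * z))
          ≤ (C₀ * Real.exp (1 * z.im)) * Real.exp (-((α * z.re + β)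
            * Real.log (‖z‖)) + α * z.im * Complex.arg (-Complex.I * z)) :=
            mul_le_mul_of_nonneg_right hfz (Real.exp_pos _).le
        _ = C₀ * Real.exp (1 * z.im - (α * z.re + β) * Real.log (‖z‖)
            + α * z.im * Complex.arg (-Complex.I * z)) := by
            rw [mul_assoc, ← Real.exp_add]; ring_nf
        _ ≤ M₃ := by
            rw [hM₃]
            apply mul_exp_le hC₀0 le_rfl
            obtain ⟨hk1, hk2⟩ := abs_le.mp hLz
            obtain ⟨hv1, hv2⟩ := abs_le.mp hv
            have hlogim : 0 ≤ Real.log z.im := Real.log_nonneg (le_trans hη'1 h3)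
            have hlogabs : 0 ≤ Real.log (‖z‖) := le_trans hlogim hd1
            rw [him] at hd2 hv1 hv2 ⊢
            have hq1 : (0:ℝ) ≤ (Λ + (α * z.re + β)) * Real.log (‖z‖) :=
              mul_nonneg (by linarith) hlogabs
            have hq2 : Λ * Real.log (‖z‖)
                ≤ Λ * (Real.log K + Real.log η') := mul_le_mul_of_nonneg_left hd2 hΛ0
            linarith [hq1, hq2, hv2]
        _ ≤ M := le_max_right _ _
  -- growth bound for F
  have hgrowF : ∀ ε : ℝ, 0 < ε → ∃ C : ℝ, 0 ≤ C ∧ ∀ z : ℂ,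
      a ≤ z.re → z.re ≤ b → η' ≤ z.im → ‖F z‖ ≤ C * Real.exp (ε * z.im) := by
    intro ε hε
    obtain ⟨C₃, hC₃⟩ := hexp (ε / 2) (by linarith)
    have hC₃0 : 0 ≤ C₃ := by
      have h : ‖f ⟨a, η + 1⟩‖ ≤ C₃ * Real.exp (ε / 2 * (η + 1)) :=
        hC₃ ⟨a, η + 1⟩ le_rfl hab.le (by norm_num)
      exact (mul_nonneg_iff_of_pos_right (Real.exp_pos _)).1 ((norm_nonneg _).trans h)
    obtain ⟨Cp, hCp⟩ := poly_le_exp Λ (ε / 2) (by linarith)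
    have hCp0 : 0 ≤ Cp := by
      have h := hCp 1 le_rfl
      rw [Real.log_one, mul_zero, Real.exp_zero] at h
      exact (mul_nonneg_iff_of_pos_right (Real.exp_pos _)).1 ((Real.exp_pos 0).le.trans (by simpa using h))
    refine ⟨C₃ * Real.exp (Λ * Real.log K + A) * Cp, by positivity, ?_⟩
    intro z h1 h2 h3
    have hzim : 0 < z.im := lt_of_lt_of_le hη'pos h3
    have hzη : η < z.im := by rw [hη'] at h3; linarith
    have hzim1 : 1 ≤ z.im := le_trans hη'1 h3
    have hv := hargbd z h1 h2 hzim
    obtain ⟨hd1, hd2⟩ := hloglog z h1 h2 h3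
    have hLz := hLbound z.re h1 h2
    have hfz : ‖f z‖ ≤ C₃ * Real.exp (ε / 2 * z.im) := hC₃ z h1 h2 hzη
    have hlogim : 0 ≤ Real.log z.im := Real.log_nonneg hzim1
    rw [hFnorm z hzim]
    calc ‖f z‖ * Real.exp (-((α * z.re + β) * Real.log (‖z‖))
          + α * z.im * Complex.arg (-Complex.I * z))
        ≤ (C₃ * Real.exp (ε / 2 * z.im)) * Real.exp (-((α * z.re + β)
          * Real.log (‖z‖)) + α * z.im * Complex.arg (-Complex.I * z)) :=
          mul_le_mul_of_nonneg_right hfz (Real.exp_pos _).le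
      _ ≤ (C₃ * Real.exp (ε / 2 * z.im)) * Real.exp (Λ * Real.log K + A
          + Λ * Real.log z.im) := by
          apply mul_le_mul_of_nonneg_left _ (mul_nonneg hC₃0 (Real.exp_pos _).le)
          apply Real.exp_le_exp.2
          obtain ⟨hk1, hk2⟩ := abs_le.mp hLz
          obtain ⟨hv1, hv2⟩ := abs_le.mp hv
          have hlogabs : 0 ≤ Real.log (‖z‖) := le_trans hlogim hd1
          have hq1 : (0:ℝ) ≤ (Λ + (α * z.re + β)) * Real.log (‖z‖) :=
            mul_nonneg (by linarith) hlogabs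
          have hq2 : Λ * Real.log (‖z‖)
              ≤ Λ * (Real.log K + Real.log z.im) := mul_le_mul_of_nonneg_left hd2 hΛ0
          linarith [hq1, hq2, hv2]
      _ = (C₃ * Real.exp (ε / 2 * z.im)) * (Real.exp (Λ * Real.log K + A)
          * Real.exp (Λ * Real.log z.im)) := by
          rw [Real.exp_add]
      _ ≤ (C₃ * Real.exp (ε / 2 * z.im)) * (Real.exp (Λ * Real.log K + A)
          * (Cp * Real.exp (ε / 2 * z.im))) := by
          apply mul_le_mul_of_nonneg_left _ (mul_nonneg hC₃0 (Real.exp_pos _).le)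
          exact mul_le_mul_of_nonneg_left (hCp z.im hzim1) (Real.exp_pos _).le
      _ = (C₃ * Real.exp (Λ * Real.log K + A) * Cp) * (Real.exp (ε / 2 * z.im)
          * Real.exp (ε / 2 * z.im)) := by ring
      _ = C₃ * Real.exp (Λ * Real.log K + A) * Cp * Real.exp (ε * z.im) := by
          rw [← Real.exp_add]
          ring_nf
  -- regularity of F
  have hslit : ∀ z : ℂ, 0 < z.im → -Complex.I * z ∈ Complex.slitPlane := by
    intro z hz
    rw [Complex.mem_slitPlane_iff]
    left
    simpa [Complex.mul_re] using hz
  have hFcont : ContinuousOn F {z : ℂ | a ≤ z.re ∧ z.re ≤ b ∧ η' ≤ z.im} := by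
    rw [hF]
    apply ContinuousOn.mul
    · apply hcont.mono
      intro z hz
      exact ⟨hz.1, hz.2.1, by have := hz.2.2; rw [hη'] at this; linarith⟩
    · intro z hz
      apply ContinuousAt.continuousWithinAt
      have hzim : 0 < z.im := lt_of_lt_of_le hη'pos hz.2.2
      apply ContinuousAt.cexp
      apply ContinuousAt.mul
      · exact ((continuousAt_const.mul continuousAt_id).add continuousAt_const).neg
      · exact ContinuousAt.clog (continuousAt_const.mul continuousAt_id) (hslit z hzim)
  have hFdiff : DifferentiableOn ℂ F {z : ℂ | a < z.re ∧ z.re < b ∧ η' < z.im} := by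
    rw [hF]
    apply DifferentiableOn.mul
    · apply hanal.mono
      intro z hz
      exact ⟨hz.1, hz.2.1, by have := hz.2.2; rw [hη'] at this; linarith⟩
    · intro z hz
      apply DifferentiableAt.differentiableWithinAt
      have hzim : 0 < z.im := lt_trans hη'pos hz.2.2
      apply DifferentiableAt.cexp
      apply DifferentiableAt.mul
      · exact (((differentiableAt_const _).mul differentiableAt_id).add
          (differentiableAt_const _)).neg
      · exact DifferentiableAt.clog ((differentiableAt_const _).mul differentiableAt_id)
          (hslit z hzim)
  -- apply the maximum principle on the half-strip im ≥ η'
  have hFbound := halfstrip_max hab hη'pos hM0 hFcont hFdiff hgrowF hbdF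
  -- final constants
  set Chi : ℝ := M * Real.exp (A + Λ * Real.log K) with hChi
  set m : ℝ := |Real.log η| + |Real.log η'| with hm
  have hm0 : 0 ≤ m := by positivity
  set Clo : ℝ := C₀ * Real.exp (η' + Λ * m) with hClo
  have hChi0 : 0 ≤ Chi := by positivity
  have hClo0 : 0 ≤ Clo := by positivity
  refine ⟨max Chi Clo, ?_⟩
  intro z h1 h2 h3
  rw [hL z.re]
  have hLz := hLbound z.re h1 h2
  obtain ⟨hk1, hk2⟩ := abs_le.mp hLz
  rcases le_or_gt η' z.im with hcase | hcase
  · -- inner region: use the bound on F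
    have hzim : 0 < z.im := lt_of_lt_of_le hη'pos hcase
    have hzim1 : 1 ≤ z.im := le_trans hη'1 hcase
    have hv := hargbd z h1 h2 hzim
    obtain ⟨hv1, hv2⟩ := abs_le.mp hv
    obtain ⟨hd1, hd2⟩ := hloglog z h1 h2 hcase
    have hlogim : 0 ≤ Real.log z.im := Real.log_nonneg hzim1
    have hFz := hFbound z h1 h2 hcase
    rw [hf_from_F z hzim]
    calc ‖F z‖ * Real.exp ((α * z.re + β) * Real.log (‖z‖)
          - α * z.im * Complex.arg (-Complex.I * z))
        ≤ M * Real.exp ((α * z.re + β) * Real.log (‖z‖)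
          - α * z.im * Complex.arg (-Complex.I * z)) :=
          mul_le_mul_of_nonneg_right hFz (Real.exp_pos _).le
      _ ≤ M * Real.exp (A + Λ * Real.log K + (α * z.re + β) * Real.log z.im) := by
          apply mul_le_mul_of_nonneg_left _ hM0
          apply Real.exp_le_exp.2
          have ht0 : 0 ≤ Real.log (‖z‖) - Real.log z.im := sub_nonneg.2 hd1
          have htK : Real.log (‖z‖) - Real.log z.im ≤ Real.log K := by linarith
          have hp1 : (α * z.re + β) * (Real.log (‖z‖) - Real.log z.im)
              ≤ Λ * (Real.log (‖z‖) - Real.log z.im) :=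
            mul_le_mul_of_nonneg_right (by linarith) ht0
          have hp2 : Λ * (Real.log (‖z‖) - Real.log z.im) ≤ Λ * Real.log K :=
            mul_le_mul_of_nonneg_left htK hΛ0
          linarith [hp1, hp2, hv1]
      _ = Chi * Real.exp ((α * z.re + β) * Real.log z.im) := by
          rw [hChi, mul_assoc, ← Real.exp_add]
      _ ≤ max Chi Clo * Real.exp ((α * z.re + β) * Real.log z.im) :=
          mul_le_mul_of_nonneg_right (le_max_left _ _) (Real.exp_pos _).le
  · -- low region: use the crude exponential bound
    have hzim : 0 < z.im := lt_trans hη h3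
    have hfz : ‖f z‖ ≤ C₀ * Real.exp (1 * z.im) := hC₀ z h1 h2 h3
    have hlogy1 : Real.log z.im ≤ m := by
      rw [hm]
      have h5 : Real.log z.im ≤ Real.log η' := Real.log_le_log hzim hcase.le
      have := le_abs_self (Real.log η')
      have := abs_nonneg (Real.log η)
      linarith
    have hlogy2 : -m ≤ Real.log z.im := by
      rw [hm]
      have h5 : Real.log η ≤ Real.log z.im := Real.log_le_log hη h3.le
      have := neg_abs_le (Real.log η)
      have := abs_nonneg (Real.log η')
      linarith
    have hexp_ge : Real.exp (-(Λ * m)) ≤ Real.exp ((α * z.re + β) * Real.log z.im) := by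
      apply Real.exp_le_exp.2
      rcases le_or_gt 0 (Real.log z.im) with hsgn | hsgn
      · have := mul_le_mul_of_nonneg_right (by linarith : -Λ ≤ α * z.re + β) hsgn
        have hm1 : Λ * Real.log z.im ≤ Λ * m := mul_le_mul_of_nonneg_left hlogy1 hΛ0
        nlinarith [this, hm1]
      · have h6 : (α * z.re + β) * Real.log z.im ≥ Λ * Real.log z.im := by
          nlinarith [hsgn.le, hk2]
        have hm1 : Λ * (-m) ≤ Λ * Real.log z.im := mul_le_mul_of_nonneg_left hlogy2 hΛ0
        nlinarith [h6, hm1]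
    calc ‖f z‖ ≤ C₀ * Real.exp (1 * z.im) := hfz
      _ ≤ C₀ * Real.exp η' := by
          apply mul_le_mul_of_nonneg_left _ hC₀0
          apply Real.exp_le_exp.2
          rw [one_mul]; exact hcase.le
      _ = Clo * Real.exp (-(Λ * m)) := by
          rw [hClo, mul_assoc, ← Real.exp_add]
          congr 2
          ring
      _ ≤ Clo * Real.exp ((α * z.re + β) * Real.log z.im) :=
          mul_le_mul_of_nonneg_left hexp_ge hClo0
      _ ≤ max Chi Clo * Real.exp ((α * z.re + β) * Real.log z.im) :=
          mul_le_mul_of_nonneg_right (le_max_right _ _) (Real.exp_pos _).le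


/-- Phragmén–Lindelöf principle for the half-strips
`S = {z : a ≤ Re z ≤ b, |Im z| > η}`. -/
theorem phragmen_lindelof_strip (f : ℂ → ℂ) (a b η k₁ k₂ : ℝ) (hab : a < b) (hη : 0 < η)
    (hcont : ContinuousOn f {z : ℂ | a ≤ z.re ∧ z.re ≤ b ∧ η < |z.im|})
    (hanal : DifferentiableOn ℂ f {z : ℂ | a < z.re ∧ z.re < b ∧ η < |z.im|})
    (hexp : ∀ ε : ℝ, 0 < ε → ∃ C : ℝ,
      ∀ z ∈ {z : ℂ | a ≤ z.re ∧ z.re ≤ b ∧ η < |z.im|}, ‖f z‖ ≤ C * Real.exp (ε * |z.im|))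
    (ha : ∃ C₁ : ℝ, ∀ y : ℝ, η < |y| → ‖f ((a:ℂ) + (y:ℂ) * Complex.I)‖ ≤ C₁ * |y| ^ k₁)
    (hb : ∃ C₂ : ℝ, ∀ y : ℝ, η < |y| → ‖f ((b:ℂ) + (y:ℂ) * Complex.I)‖ ≤ C₂ * |y| ^ k₂) :
    ∃ C : ℝ, ∀ z ∈ {z : ℂ | a ≤ z.re ∧ z.re ≤ b ∧ η < |z.im|},
      ‖f z‖ ≤ C * |z.im| ^ (((k₁ - k₂) * z.re + k₂ * a - k₁ * b) / (a - b)) := by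
  obtain ⟨C₁, hC₁⟩ := ha
  obtain ⟨C₂, hC₂⟩ := hb
  -- upper half-strip
  have upper : ∃ C : ℝ, ∀ z : ℂ, a ≤ z.re → z.re ≤ b → η < z.im →
      ‖f z‖ ≤ C * Real.exp ((((k₁ - k₂) * z.re + k₂ * a - k₁ * b) / (a - b))
        * Real.log z.im) := by
    apply upper_halfstrip f a b η k₁ k₂ hab hη
    · apply hcont.mono
      intro z hz
      refine ⟨hz.1, hz.2.1, ?_⟩
      have : 0 < z.im := lt_trans hη hz.2.2
      simp only [mem_setOf_eq] at *
      rw [abs_of_pos this]; exact hz.2.2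
    · apply hanal.mono
      intro z hz
      refine ⟨hz.1, hz.2.1, ?_⟩
      have : 0 < z.im := lt_trans hη hz.2.2
      simp only [mem_setOf_eq] at *
      rw [abs_of_pos this]; exact hz.2.2
    · intro ε hε
      obtain ⟨C, hC⟩ := hexp ε hε
      refine ⟨C, fun z h1 h2 h3 => ?_⟩
      have h4 : 0 < z.im := lt_trans hη h3
      have := hC z ⟨h1, h2, by rw [abs_of_pos h4]; exact h3⟩
      rwa [abs_of_pos h4] at this
    · refine ⟨C₁, fun y hy => ?_⟩
      have hy0 : 0 < y := lt_trans hη hy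
      have := hC₁ y (by rw [abs_of_pos hy0]; exact hy)
      rwa [abs_of_pos hy0, Real.rpow_def_of_pos hy0, mul_comm (Real.log y) k₁] at this
    · refine ⟨C₂, fun y hy => ?_⟩
      have hy0 : 0 < y := lt_trans hη hy
      have := hC₂ y (by rw [abs_of_pos hy0]; exact hy)
      rwa [abs_of_pos hy0, Real.rpow_def_of_pos hy0, mul_comm (Real.log y) k₂] at this
  -- lower half-strip via z ↦ -z
  have hmaps : ∀ z : ℂ, -b ≤ z.re → z.re ≤ -a → η < z.im →
      a ≤ (-z).re ∧ (-z).re ≤ b ∧ η < |(-z).im| := by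
    intro z h1 h2 h3
    refine ⟨by simp only [Complex.neg_re]; linarith, by simp only [Complex.neg_re]; linarith, ?_⟩
    have : 0 < z.im := lt_trans hη h3
    rw [Complex.neg_im, abs_neg, abs_of_pos this]
    exact h3
  have lower : ∃ C : ℝ, ∀ z : ℂ, -b ≤ z.re → z.re ≤ -a → η < z.im →
      ‖f (-z)‖ ≤ C * Real.exp ((((k₂ - k₁) * z.re + k₁ * (-b) - k₂ * (-a)) / (-b - -a))
        * Real.log z.im) := by
    apply upper_halfstrip (fun z => f (-z)) (-b) (-a) η k₂ k₁ (by linarith) hη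
    · apply ContinuousOn.comp hcont (continuous_neg.continuousOn)
      intro z hz
      exact hmaps z hz.1 hz.2.1 hz.2.2
    · apply DifferentiableOn.comp hanal (differentiable_neg.differentiableOn)
      intro z hz
      obtain ⟨g1, g2, g3⟩ := hz
      have h0 : 0 < z.im := lt_trans hη g3
      exact ⟨by simp only [Complex.neg_re]; linarith, by simp only [Complex.neg_re]; linarith,
        by rw [Complex.neg_im, abs_neg, abs_of_pos h0]; exact g3⟩
    · intro ε hε
      obtain ⟨C, hC⟩ := hexp ε hε
      refine ⟨C, fun z h1 h2 h3 => ?_⟩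
      have h4 : 0 < z.im := lt_trans hη h3
      have := hC (-z) (hmaps z h1 h2 h3)
      rwa [Complex.neg_im, abs_neg, abs_of_pos h4] at this
    · refine ⟨C₂, fun y hy => ?_⟩
      have hy0 : 0 < y := lt_trans hη hy
      have heq : -(((-b : ℝ) : ℂ) + (y : ℂ) * Complex.I) = (b : ℂ) + ((-y : ℝ) : ℂ) * Complex.I := by
        push_cast; ring
      have := hC₂ (-y) (by rw [abs_neg, abs_of_pos hy0]; exact hy)
      rw [← heq] at this
      rwa [abs_neg, abs_of_pos hy0, Real.rpow_def_of_pos hy0, mul_comm (Real.log y) k₂] at this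
    · refine ⟨C₁, fun y hy => ?_⟩
      have hy0 : 0 < y := lt_trans hη hy
      have heq : -(((-a : ℝ) : ℂ) + (y : ℂ) * Complex.I) = (a : ℂ) + ((-y : ℝ) : ℂ) * Complex.I := by
        push_cast; ring
      have := hC₁ (-y) (by rw [abs_neg, abs_of_pos hy0]; exact hy)
      rw [← heq] at this
      rwa [abs_neg, abs_of_pos hy0, Real.rpow_def_of_pos hy0, mul_comm (Real.log y) k₁] at this
  obtain ⟨Cu, hCu⟩ := upper
  obtain ⟨Cl, hCl⟩ := lower
  refine ⟨max Cu Cl, ?_⟩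
  intro z hz
  obtain ⟨h1, h2, h3⟩ := hz
  have habs0 : 0 < |z.im| := lt_trans hη h3
  rw [Real.rpow_def_of_pos habs0, mul_comm (Real.log |z.im|)]
  rcases lt_abs.mp h3 with hup | hdn
  · -- upper half-strip
    have h4 : 0 < z.im := lt_trans hη hup
    have := hCu z h1 h2 hup
    rw [abs_of_pos h4]
    calc ‖f z‖ ≤ Cu * Real.exp ((((k₁ - k₂) * z.re + k₂ * a - k₁ * b) / (a - b))
          * Real.log z.im) := this
      _ ≤ max Cu Cl * Real.exp ((((k₁ - k₂) * z.re + k₂ * a - k₁ * b) / (a - b))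
          * Real.log z.im) :=
          mul_le_mul_of_nonneg_right (le_max_left _ _) (Real.exp_pos _).le
  · -- lower half-strip
    have h4 : z.im < 0 := by linarith
    have h5 : η < (-z).im := by rw [Complex.neg_im]; linarith
    have h6 : -b ≤ (-z).re := by rw [Complex.neg_re]; linarith
    have h7 : (-z).re ≤ -a := by rw [Complex.neg_re]; linarith
    have := hCl (-z) h6 h7 h5
    rw [neg_neg] at this
    rw [abs_of_neg h4]
    have hexpo : (((k₂ - k₁) * (-z).re + k₁ * (-b) - k₂ * (-a)) / (-b - -a))
        * Real.log (-z).im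
        = (((k₁ - k₂) * z.re + k₂ * a - k₁ * b) / (a - b)) * Real.log (-z.im) := by
      rw [Complex.neg_im, Complex.neg_re]
      congr 1
      rw [show -b - -a = a - b by ring]
      congr 1
      ring
    rw [hexpo] at this
    calc ‖f z‖ ≤ Cl * Real.exp ((((k₁ - k₂) * z.re + k₂ * a - k₁ * b) / (a - b))
          * Real.log (-z.im)) := this
      _ ≤ max Cu Cl * Real.exp ((((k₁ - k₂) * z.re + k₂ * a - k₁ * b) / (a - b))
          * Real.log (-z.im)) :=
          mul_le_mul_of_nonneg_right (le_max_right _ _) (Real.exp_pos _).le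
end

section
/- For ρ > −1 and y > 0, ∫₀^∞ (Σ_{n ≤ x, n ∈ ℕ} a(n)(x−n)^ρ / Γ(ρ+1)) y^{ρ+1} e^{−yx} dx = Σ_{n≥1} a(n) e^{−ny}, provided Σ a(n) e^{−ny} converges absolutely for all y > 0 and a(n) = O(n^μ) for some μ ≥ 0. -/
open MeasureTheory Real Set Filter Asymptotics

lemma base_integrableOn {ρ y : ℝ} (hρ : -1 < ρ) (hy : 0 < y) :
    IntegrableOn (fun t : ℝ => t ^ ρ * Real.exp (-(y * t))) (Ioi 0) := by
  have h1 : IntegrableOn (fun x : ℝ => Real.exp (-x) * x ^ ρ) (Ioi 0) := by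
    have := Real.GammaIntegral_convergent (s := ρ + 1) (by linarith)
    simpa using this
  have h2 : IntegrableOn (fun x : ℝ => Real.exp (-(y * x)) * (y * x) ^ ρ) (Ioi 0) := by
    have := (integrableOn_Ioi_comp_mul_left_iff
      (fun x : ℝ => Real.exp (-x) * x ^ ρ) 0 hy).mpr (by simpa using h1)
    simpa using this
  have h3 : IntegrableOn (fun x : ℝ => y ^ ρ * (x ^ ρ * Real.exp (-(y * x)))) (Ioi 0) :=
    h2.congr_fun (fun x hx => by
      dsimp only; rw [Real.mul_rpow hy.le (le_of_lt hx)]; ring) measurableSet_Ioi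
  have h4 : IntegrableOn (fun x : ℝ => ((y:ℝ) ^ ρ)⁻¹ * (y ^ ρ * (x ^ ρ * Real.exp (-(y * x))))) (Ioi 0) := h3.const_mul ((y : ℝ) ^ ρ)⁻¹
  have hyρ : (y : ℝ) ^ ρ ≠ 0 := (Real.rpow_pos_of_pos hy ρ).ne'
  refine h4.congr_fun (fun x _ => ?_) measurableSet_Ioi
  field_simp

lemma key_lemma {ρ y : ℝ} (hρ : -1 < ρ) (hy : 0 < y) {c : ℝ} (hc : 0 ≤ c) :
    IntegrableOn (fun x : ℝ =>
        (if c ≤ x then (x - c) ^ ρ else 0) * (y ^ (ρ + 1) * Real.exp (-y * x))) (Ioi 0) ∧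
      ∫ x in Ioi (0:ℝ), (if c ≤ x then (x - c) ^ ρ else 0) * (y ^ (ρ + 1) * Real.exp (-y * x))
        = Real.Gamma (ρ + 1) * Real.exp (-c * y) := by
  set C : ℝ := y ^ (ρ + 1) * Real.exp (-y * c) with hC
  set g : ℝ → ℝ := fun x => (x - c) ^ ρ * (y ^ (ρ + 1) * Real.exp (-y * x)) with hg
  have hmp : MeasurePreserving (fun x : ℝ => x + c) volume volume :=
    measurePreserving_add_right volume c
  have hemb : MeasurableEmbedding (fun x : ℝ => x + c) :=
    (MeasurableEquiv.addRight c).measurableEmbedding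
  have hpre : (fun x : ℝ => x + c) ⁻¹' (Ioi c) = Ioi 0 := by
    rw [preimage_add_const_Ioi]; simp
  have hcomp : (g ∘ fun x : ℝ => x + c)
      = fun t => C * (t ^ ρ * Real.exp (-(y * t))) := by
    funext t
    simp only [Function.comp, hg, hC, add_sub_cancel_right]
    rw [show -y * (t + c) = -(y * t) + -y * c by ring, Real.exp_add]
    ring
  -- integrability of g on Ioi c
  have hIgc : IntegrableOn g (Ioi c) := by
    refine (hmp.integrableOn_comp_preimage hemb).mp ?_
    rw [hpre, hcomp]
    exact (base_integrableOn hρ hy).const_mul C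
  -- integral of g over Ioi c
  have hbase : ∫ t in Ioi (0:ℝ), t ^ ρ * Real.exp (-(y * t))
      = (1 / y) ^ (ρ + 1) * Real.Gamma (ρ + 1) := by
    have := integral_rpow_mul_exp_neg_mul_Ioi (a := ρ + 1) (by linarith) hy
    simpa using this
  have hIgval : ∫ x in Ioi c, g x = Real.Gamma (ρ + 1) * Real.exp (-c * y) := by
    have := hmp.setIntegral_preimage_emb hemb g (Ioi c)
    rw [hpre] at this
    rw [← this]
    have : ∫ t in Ioi (0:ℝ), g (t + c) = C * ((1 / y) ^ (ρ + 1) * Real.Gamma (ρ + 1)) := by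
      have h1 : (fun t : ℝ => g (t + c)) = fun t => C * (t ^ ρ * Real.exp (-(y * t))) := hcomp
      rw [h1, MeasureTheory.integral_const_mul, hbase]
    rw [this, hC]
    rw [one_div, Real.inv_rpow hy.le]
    have hne : (y:ℝ) ^ (ρ + 1) ≠ 0 := (Real.rpow_pos_of_pos hy _).ne'
    rw [show -c * y = -y * c by ring]
    field_simp
  -- now pass from the `if` form on Ioi 0 to g on Ioi c
  have hae : ∀ᵐ x : ℝ ∂(volume.restrict (Ioi 0)),
      (if c ≤ x then (x - c) ^ ρ else 0) * (y ^ (ρ + 1) * Real.exp (-y * x))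
        = (Ioi c).indicator g x := by
    refine ae_restrict_of_ae ?_
    have hc0 : (volume : Measure ℝ) {c} = 0 := measure_singleton c
    filter_upwards [compl_mem_ae_iff.mpr hc0] with x hx
    simp only [mem_compl_iff, mem_singleton_iff] at hx
    by_cases h : c ≤ x
    · have hlt : c < x := lt_of_le_of_ne h (Ne.symm hx)
      rw [if_pos h, indicator_of_mem (mem_Ioi.mpr hlt)]
    · rw [if_neg h, indicator_of_notMem (fun h' => h (le_of_lt (mem_Ioi.mp h'))), zero_mul]
  have hIciIoi : IntegrableOn g (Ici c) := by
    rwa [integrableOn_Ici_iff_integrableOn_Ioi]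
  constructor
  · have hInd : Integrable ((Ioi c).indicator g) :=
      hIgc.integrable_indicator measurableSet_Ioi
    exact (MeasureTheory.integrable_congr hae).mpr hInd.integrableOn
  · rw [MeasureTheory.integral_congr_ae hae,
      MeasureTheory.setIntegral_indicator measurableSet_Ioi,
      Ioi_inter_Ioi, max_eq_right hc, hIgval]

/-- For `ρ > -1` and `y > 0`:
`∫₀^∞ (Σ_{n ≤ x} a(n)(x-n)^ρ / Γ(ρ+1)) y^(ρ+1) e^(-yx) dx = Σ_{n≥1} a(n) e^(-ny)`,
given polynomial growth of `a(n)` and absolute convergence of `Σ a(n) e^(-ny)`. -/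
theorem laplace_of_riesz_mean (a : ℕ → ℂ) (μ ρ y : ℝ) (hμ : 0 ≤ μ)
    (hgrow : (fun n : ℕ => a n) =O[atTop] fun n : ℕ => (n:ℝ) ^ μ)
    (habs : ∀ y' : ℝ, 0 < y' → Summable fun n : ℕ => ‖a (n+1)‖ * Real.exp (-((n:ℝ)+1) * y'))
    (hρ : -1 < ρ) (hy : 0 < y) :
    (∫ x in Set.Ioi (0:ℝ),
        ((∑' n : ℕ, if ((n:ℝ) + 1) ≤ x then a (n+1) * (((x - ((n:ℝ)+1)) ^ ρ : ℝ) : ℂ) else 0)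
            / (Real.Gamma (ρ + 1) : ℂ))
          * ((y ^ (ρ + 1) * Real.exp (-y * x) : ℝ) : ℂ))
      = ∑' n : ℕ, a (n+1) * (Real.exp (-((n:ℝ)+1) * y) : ℂ) := by
  have hΓ : 0 < Real.Gamma (ρ + 1) := Real.Gamma_pos_of_pos (by linarith)
  set Γ : ℝ := Real.Gamma (ρ + 1) with hΓdef
  -- the real-valued "profile" functions and the complex summand functions
  set F : ℕ → ℝ → ℝ := fun n x =>
    (if ((n:ℝ) + 1) ≤ x then (x - ((n:ℝ)+1)) ^ ρ else 0) * (y ^ (ρ + 1) * Real.exp (-y * x))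
    with hFdef
  set f : ℕ → ℝ → ℂ := fun n x =>
    (a (n+1) / (Γ : ℂ)) * ((F n x : ℝ) : ℂ) with hfdef
  have hkey : ∀ n : ℕ, IntegrableOn (F n) (Ioi 0) ∧
      ∫ x in Ioi (0:ℝ), F n x = Γ * Real.exp (-((n:ℝ)+1) * y) :=
    fun n => key_lemma hρ hy (by positivity)
  -- pointwise identity between the integrand and `∑' n, f n x`
  have hpt : ∀ x : ℝ,
      ((∑' n : ℕ, if ((n:ℝ) + 1) ≤ x then a (n+1) * (((x - ((n:ℝ)+1)) ^ ρ : ℝ) : ℂ) else 0)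
            / (Γ : ℂ)) * ((y ^ (ρ + 1) * Real.exp (-y * x) : ℝ) : ℂ)
        = ∑' n : ℕ, f n x := by
    intro x
    rw [← tsum_div_const, ← tsum_mul_right]
    congr 1
    funext n
    by_cases h : ((n:ℝ) + 1) ≤ x
    · simp only [hfdef, hFdef, if_pos h]
      push_cast
      ring
    · simp only [hfdef, hFdef, if_neg h]
      push_cast
      ring
  -- integrability of each `f n`
  have hInt : ∀ n : ℕ, Integrable (f n) (volume.restrict (Ioi 0)) := by
    intro n
    exact ((hkey n).1.ofReal (𝕜 := ℂ)).const_mul _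
  -- value of each integral
  have hval : ∀ n : ℕ, ∫ x in Ioi (0:ℝ), f n x
      = a (n+1) * (Real.exp (-((n:ℝ)+1) * y) : ℂ) := by
    intro n
    rw [hfdef]
    simp only
    rw [MeasureTheory.integral_const_mul]
    rw [show (∫ x in Ioi (0:ℝ), ((F n x : ℝ) : ℂ)) = ((∫ x in Ioi (0:ℝ), F n x : ℝ) : ℂ) from
      integral_ofReal (𝕜 := ℂ), (hkey n).2]
    have hΓne : (Γ : ℂ) ≠ 0 := by
      exact_mod_cast (Complex.ofReal_ne_zero.mpr hΓ.ne')
    push_cast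
    field_simp
  -- norm computation
  have hFnonneg : ∀ n x, 0 ≤ F n x := by
    intro n x
    rw [hFdef]
    simp only
    by_cases h : ((n:ℝ) + 1) ≤ x
    · rw [if_pos h]
      have : (0:ℝ) ≤ (x - ((n:ℝ)+1)) ^ ρ := Real.rpow_nonneg (by linarith) ρ
      positivity
    · rw [if_neg h, zero_mul]
  have hnorm : ∀ n x, ‖f n x‖ = (‖a (n+1)‖ / Γ) * F n x := by
    intro n x
    rw [hfdef]
    simp only [norm_mul, norm_div, Complex.norm_real, Real.norm_eq_abs,
      abs_of_nonneg (hFnonneg n x), Complex.norm_real, abs_of_pos hΓ]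
  -- summability of the lintegrals of the norms
  have hlint : ∀ n : ℕ, ∫⁻ x in Ioi (0:ℝ), ‖f n x‖₊
      = ENNReal.ofReal (‖a (n+1)‖ * Real.exp (-((n:ℝ)+1) * y)) := by
    intro n
    simp_rw [← enorm_eq_nnnorm]
    rw [← MeasureTheory.ofReal_integral_norm_eq_lintegral_enorm (hInt n)]
    congr 1
    calc ∫ x in Ioi (0:ℝ), ‖f n x‖
        = ∫ x in Ioi (0:ℝ), (‖a (n+1)‖ / Γ) * F n x := by
          exact MeasureTheory.integral_congr_ae
            (Filter.Eventually.of_forall fun x => hnorm n x)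
      _ = (‖a (n+1)‖ / Γ) * (Γ * Real.exp (-((n:ℝ)+1) * y)) := by
          rw [MeasureTheory.integral_const_mul, (hkey n).2]
      _ = ‖a (n+1)‖ * Real.exp (-((n:ℝ)+1) * y) := by
          field_simp
  have hsum : (∑' n : ℕ, ∫⁻ x in Ioi (0:ℝ), ‖f n x‖₊) ≠ ⊤ := by
    simp_rw [hlint]
    rw [← ENNReal.ofReal_tsum_of_nonneg (fun n => by positivity) (habs y hy)]
    exact ENNReal.ofReal_ne_top
  -- interchange sum and integral
  calc (∫ x in Set.Ioi (0:ℝ),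
        ((∑' n : ℕ, if ((n:ℝ) + 1) ≤ x then a (n+1) * (((x - ((n:ℝ)+1)) ^ ρ : ℝ) : ℂ) else 0)
            / (Γ : ℂ)) * ((y ^ (ρ + 1) * Real.exp (-y * x) : ℝ) : ℂ))
      = ∫ x in Ioi (0:ℝ), ∑' n : ℕ, f n x :=
        MeasureTheory.integral_congr_ae (Filter.Eventually.of_forall hpt)
    _ = ∑' n : ℕ, ∫ x in Ioi (0:ℝ), f n x :=
        MeasureTheory.integral_tsum (fun n => (hInt n).aestronglyMeasurable) hsum
    _ = ∑' n : ℕ, a (n+1) * (Real.exp (-((n:ℝ)+1) * y) : ℂ) := by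
        exact tsum_congr hval
end
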